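/- arXiv:math/0611129 — 6 statements merged into one kernel-verified Lean document; each statement's English description precedes it below -/
import Mathlib

section
/- Let n and k be positive integers with k even and 3k = 2n + 2. Let V be a complex vector space of dimension 2n + 1 equipped with a nondegenerate symmetric bilinear form B, and let x be a B-skew-adjoint nilpotent endomorphism of V of Jordan type [3^{k-2}, 2^2, 1] (equivalently, x^3 = 0, rank(x^2) = k - 2, and rank(x) = 2k - 2). Then there exists exactly one pair (F_1, F_2) of linear subspaces of V such that F_1 ⊆ F_2, dim F_1 = k, F_2 is the orthogonal complement of F_1 with respect to B, x(F_1) = 0, x(F_2) ⊆ F_1, and x(V) ⊆ F_2. -/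
/-- **Type Bₙ case of the key step of Proposition 3.1** (Namikawa,
"Birational geometry of symplectic resolutions of nilpotent orbits").
Let `n, k > 0` with `k` even and `3k = 2n + 2`.  Let `V` be a complex vector
space of dimension `2n + 1` with a nondegenerate symmetric bilinear form `B`,
and let `x` be a `B`-skew-adjoint nilpotent endomorphism of Jordan type
`[3^{k-2}, 2^2, 1]`, i.e. `x³ = 0`, `rank x² = k - 2` and `rank x = 2k - 2`.
Then there is exactly one pair `(F₁, F₂)` of subspaces with `F₁ ⊆ F₂`,
`dim F₁ = k`, `F₂ = F₁^⊥`, `x F₁ = 0`, `x F₂ ⊆ F₁` and `x V ⊆ F₂`. -/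
theorem unique_isotropic_flag_typeB
    (n k : ℕ) (hn : 0 < n) (hk : 0 < k) (hkeven : Even k)
    (hnk : 3 * k = 2 * n + 2)
    (V : Type*) [AddCommGroup V] [Module ℂ V] [FiniteDimensional ℂ V]
    (hdim : Module.finrank ℂ V = 2 * n + 1)
    (B : LinearMap.BilinForm ℂ V)
    (hsymm : ∀ v w : V, B v w = B w v)
    (hnd : B.Nondegenerate)
    (x : V →ₗ[ℂ] V)
    (hskew : ∀ v w : V, B (x v) w + B v (x w) = 0)
    (hx3 : x ^ 3 = 0)
    (hrk2 : Module.finrank ℂ (LinearMap.range (x ^ 2)) = k - 2)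
    (hrk1 : Module.finrank ℂ (LinearMap.range x) = 2 * k - 2) :
    ∃! F : Submodule ℂ V × Submodule ℂ V,
      F.1 ≤ F.2 ∧
      Module.finrank ℂ F.1 = k ∧
      F.2 = B.orthogonal F.1 ∧
      (∀ v ∈ F.1, x v = 0) ∧
      (∀ v ∈ F.2, x v ∈ F.1) ∧
      (∀ v : V, x v ∈ F.2) := by
  classical
  have hk2 : 2 ≤ k := by obtain ⟨m, hm⟩ := hkeven; omega
  have hrefl : B.IsRefl := fun v w h => by rw [hsymm]; exact h
  -- x³ = 0 pointwise
  have hx3' : ∀ v : V, x (x (x v)) = 0 := by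
    intro v
    have h : (x ^ 3) v = 0 := by rw [hx3]; rfl
    simpa [pow_succ, Module.End.mul_apply] using h
  -- dimension of the kernel
  have hrn := LinearMap.finrank_range_add_finrank_ker x
  have hKdim : Module.finrank ℂ (LinearMap.ker x) = k + 1 := by
    rw [hdim, hrk1] at hrn; omega
  -- dimension of R := ker x ⊓ range x
  have hRdim :
      Module.finrank ℂ (LinearMap.ker x ⊓ LinearMap.range x : Submodule ℂ V) = k := by
    have hyr : LinearMap.range (x ∘ₗ (LinearMap.range x).subtype)
        = LinearMap.range (x ^ 2) := by
      rw [LinearMap.range_comp, Submodule.range_subtype, pow_two,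
        Module.End.mul_eq_comp, LinearMap.range_comp]
    have hyk : LinearMap.ker (x ∘ₗ (LinearMap.range x).subtype)
        = Submodule.comap (LinearMap.range x).subtype
            (LinearMap.ker x ⊓ LinearMap.range x) := by
      ext ⟨v, hv⟩
      simp [LinearMap.mem_ker, hv]
    have hrn2 := LinearMap.finrank_range_add_finrank_ker
      (x ∘ₗ (LinearMap.range x).subtype)
    rw [hyr, hyk, hrk2] at hrn2
    rw [LinearEquiv.finrank_eq (Submodule.comapSubtypeEquivOfLe
      (inf_le_right : LinearMap.ker x ⊓ LinearMap.range x ≤ LinearMap.range x))] at hrn2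
    rw [hrk1] at hrn2
    omega
  -- orthogonal of the kernel is the range
  have hIle : LinearMap.range x ≤ B.orthogonal (LinearMap.ker x) := by
    rintro _ ⟨w, rfl⟩ u hu
    have h1 := hskew u w
    have hu' : x u = 0 := hu
    rw [hu'] at h1
    simpa [LinearMap.BilinForm.IsOrtho] using h1
  have hIK : B.orthogonal (LinearMap.ker x) = LinearMap.range x := by
    refine (Submodule.eq_of_le_of_finrank_le hIle ?_).symm
    rw [LinearMap.BilinForm.finrank_orthogonal hnd (LinearMap.ker x),
      hKdim, hrk1, hdim]
    omega
  -- key claim: an isotropic vector in the kernel lies in the range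
  have claimC : ∀ v ∈ LinearMap.ker x, B v v = 0 → v ∈ LinearMap.range x := by
    intro v hv hvv
    by_contra hvI
    have hvR : v ∉ (LinearMap.ker x ⊓ LinearMap.range x : Submodule ℂ V) :=
      fun h => hvI h.2
    have hsup : (LinearMap.ker x ⊓ LinearMap.range x) ⊔ Submodule.span ℂ {v}
        ≤ LinearMap.ker x :=
      sup_le inf_le_left
        ((Submodule.span_singleton_le_iff_mem v (LinearMap.ker x)).2 hv)
    have hlt : (LinearMap.ker x ⊓ LinearMap.range x : Submodule ℂ V)
        < (LinearMap.ker x ⊓ LinearMap.range x) ⊔ Submodule.span ℂ {v} := by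
      refine lt_of_le_of_ne le_sup_left fun h => hvR ?_
      rw [h]
      exact Submodule.mem_sup_right (Submodule.mem_span_singleton_self v)
    have hKeq : (LinearMap.ker x ⊓ LinearMap.range x) ⊔ Submodule.span ℂ {v}
        = LinearMap.ker x := by
      apply Submodule.eq_of_le_of_finrank_le hsup
      have hstep := Submodule.finrank_lt_finrank_of_lt hlt
      rw [hRdim] at hstep
      omega
    rw [← hIK] at hvI
    simp only [LinearMap.BilinForm.mem_orthogonal_iff, not_forall] at hvI
    obtain ⟨w, hw, hwv⟩ := hvI
    rw [← hKeq] at hw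
    obtain ⟨r, hr, s, hs, rfl⟩ := Submodule.mem_sup.1 hw
    obtain ⟨c, rfl⟩ := Submodule.mem_span_singleton.1 hs
    apply hwv
    have hrK : r ∈ B.orthogonal (LinearMap.ker x) := by rw [hIK]; exact hr.2
    have hrv : B r v = 0 := hrefl _ _ (hrK v hv)
    show B (r + c • v) v = 0
    simp [map_add, map_smul, hrv, hvv]
  -- the candidate pair
  refine ⟨(LinearMap.ker x ⊓ LinearMap.range x,
      B.orthogonal (LinearMap.ker x ⊓ LinearMap.range x)),
    ⟨?_, hRdim, rfl, ?_, ?_, ?_⟩, ?_⟩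
  · -- F₁ ≤ F₂
    intro v hv
    have hvo : v ∈ B.orthogonal (LinearMap.ker x) := by rw [hIK]; exact hv.2
    exact B.orthogonal_le inf_le_left hvo
  · -- x kills F₁
    intro v hv
    exact hv.1
  · -- x maps F₂ into F₁
    intro v hv
    refine Submodule.mem_inf.2 ⟨LinearMap.mem_ker.2 ?_, ⟨v, rfl⟩⟩
    apply hnd.1
    intro w
    have h1 := hskew (x v) w
    have h2 := hskew v (x w)
    have h3 : x (x w) ∈ (LinearMap.ker x ⊓ LinearMap.range x : Submodule ℂ V) :=
      ⟨hx3' w, ⟨x w, rfl⟩⟩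
    have h4 : B (x (x w)) v = 0 := hv _ h3
    have h5 : B v (x (x w)) = 0 := by rw [hsymm]; exact h4
    linear_combination h1 - h2 + h5
  · -- x V ⊆ F₂
    intro v u hu
    have h1 := hskew u v
    have hu' : x u = 0 := hu.1
    rw [hu'] at h1
    simpa [LinearMap.BilinForm.IsOrtho] using h1
  · -- uniqueness
    rintro ⟨F₁, F₂⟩ ⟨h12, hdimF, hF2, hxF1, hxF2, hxV⟩
    have hF2' : F₂ = B.orthogonal F₁ := hF2
    have hF1K : F₁ ≤ LinearMap.ker x := fun v hv => LinearMap.mem_ker.2 (hxF1 v hv)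
    have hF1R : F₁ ≤ LinearMap.ker x ⊓ LinearMap.range x := by
      intro v hv
      refine Submodule.mem_inf.2 ⟨hF1K hv, ?_⟩
      apply claimC v (hF1K hv)
      have hvF2 : v ∈ F₂ := h12 hv
      rw [hF2'] at hvF2
      exact hvF2 v hv
    have hF1 : F₁ = LinearMap.ker x ⊓ LinearMap.range x :=
      Submodule.eq_of_le_of_finrank_le hF1R (by rw [hdimF, hRdim])
    exact Prod.ext hF1 (by rw [hF2', hF1])
end

section
/- Let n and k be positive integers with k odd, k ≤ n - 2, and 3k = 2n + 1. Let V be a complex vector space of dimension 2n equipped with a nondegenerate symmetric bilinear form B, and let x be a B-skew-adjoint nilpotent endomorphism of V of Jordan type [3^{k-2}, 2^2, 1] (equivalently, x^3 = 0, rank(x^2) = k - 2, and rank(x) = 2k - 2). Then there exists exactly one pair (F_1, F_2) of linear subspaces of V such that F_1 ⊆ F_2, dim F_1 = k, F_2 is the orthogonal complement of F_1 with respect to B, x(F_1) = 0, x(F_2) ⊆ F_1, and x(V) ⊆ F_2. -/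
/-- **Type Dₙ case of the key step of Proposition 3.1** (Namikawa,
"Birational geometry of symplectic resolutions of nilpotent orbits").
Let `n, k > 0` with `k` odd, `k ≤ n - 2` and `3k = 2n + 1`.  Let `V` be a
complex vector space of dimension `2n` with a nondegenerate symmetric bilinear
form `B`, and let `x` be a `B`-skew-adjoint nilpotent endomorphism of Jordan
type `[3^{k-2}, 2^2, 1]`, i.e. `x³ = 0`, `rank x² = k - 2`, `rank x = 2k - 2`.
Then there is exactly one pair `(F₁, F₂)` of subspaces with `F₁ ⊆ F₂`,
`dim F₁ = k`, `F₂ = F₁^⊥`, `x F₁ = 0`, `x F₂ ⊆ F₁` and `x V ⊆ F₂`. -/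
theorem unique_isotropic_flag_typeD
    (n k : ℕ) (hn : 0 < n) (hk : 0 < k) (hkodd : Odd k) (hkn : k ≤ n - 2)
    (hnk : 3 * k = 2 * n + 1)
    (V : Type*) [AddCommGroup V] [Module ℂ V] [FiniteDimensional ℂ V]
    (hdim : Module.finrank ℂ V = 2 * n)
    (B : LinearMap.BilinForm ℂ V)
    (hsymm : ∀ v w : V, B v w = B w v)
    (hnd : B.Nondegenerate)
    (x : V →ₗ[ℂ] V)
    (hskew : ∀ v w : V, B (x v) w + B v (x w) = 0)
    (hx3 : x ^ 3 = 0)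
    (hrk2 : Module.finrank ℂ (LinearMap.range (x ^ 2)) = k - 2)
    (hrk1 : Module.finrank ℂ (LinearMap.range x) = 2 * k - 2) :
    ∃! F : Submodule ℂ V × Submodule ℂ V,
      F.1 ≤ F.2 ∧
      Module.finrank ℂ F.1 = k ∧
      F.2 = B.orthogonal F.1 ∧
      (∀ v ∈ F.1, x v = 0) ∧
      (∀ v ∈ F.2, x v ∈ F.1) ∧
      (∀ v : V, x v ∈ F.2) := by
  classical
  have hk5 : 5 ≤ k := by omega
  -- basic consequences of skew-adjointness
  have hskew' : ∀ v w : V, B (x v) w = - B v (x w) := by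
    intro v w
    exact eq_neg_of_add_eq_zero_left (hskew v w)
  have href : B.IsRefl := fun v w h => by rw [hsymm]; exact h
  -- x³ = 0 pointwise
  have is3 : ∀ v : V, x (x (x v)) = 0 := by
    intro v
    have := congrArg (fun f : V →ₗ[ℂ] V => f v) hx3
    simpa [pow_succ, Module.End.mul_apply] using this
  have hsq : ∀ v : V, (x ^ 2) v = x (x v) := by
    intro v; simp [pow_two, Module.End.mul_apply]
  set Kx := LinearMap.ker x with hKx
  set Rx := LinearMap.range x with hRx
  set K2 := LinearMap.ker (x ^ 2) with hK2
  set R2 := LinearMap.range (x ^ 2) with hR2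
  have hKxK2 : Kx ≤ K2 := by
    intro v hv
    have hv' : x v = 0 := hv
    show (x ^ 2) v = 0
    rw [hsq, hv', map_zero]
  -- dimensions of kernels
  have hrnx := LinearMap.finrank_range_add_finrank_ker x
  have hrnx2 := LinearMap.finrank_range_add_finrank_ker (x ^ 2)
  rw [hdim] at hrnx hrnx2
  rw [← hKx, ← hRx] at hrnx
  rw [← hK2, ← hR2] at hrnx2
  have hdimKx : Module.finrank ℂ Kx = k + 1 := by omega
  have hdimK2 : Module.finrank ℂ K2 = 2 * k + 1 := by omega
  -- the candidate F₁
  set P := Kx ⊓ Rx with hP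
  have hPmap : Submodule.map x K2 = P := by
    apply le_antisymm
    · rintro v ⟨u, hu, rfl⟩
      refine ⟨?_, ⟨u, rfl⟩⟩
      have : (x ^ 2) u = 0 := hu
      show x (x u) = 0
      rw [← hsq]; exact this
    · rintro v ⟨hv1, u, rfl⟩
      exact ⟨u, by simp [LinearMap.mem_ker, hsq]; exact hv1, rfl⟩
  have hdimP : Module.finrank ℂ P = k := by
    have h1 := LinearMap.finrank_range_add_finrank_ker (x.domRestrict K2)
    rw [LinearMap.range_domRestrict, hPmap] at h1
    have h2 : LinearMap.ker (x.domRestrict K2) = (Kx.comap K2.subtype) := by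
      rw [LinearMap.ker_domRestrict]
    have h3 : Module.finrank ℂ (Kx.comap K2.subtype) = Module.finrank ℂ Kx :=
      (Submodule.comapSubtypeEquivOfLe hKxK2).finrank_eq
    rw [h2, h3, hdimKx, hdimK2] at h1
    omega
  have hR2P : R2 ≤ P := by
    rintro v ⟨u, rfl⟩
    refine ⟨?_, ⟨x u, (hsq u).symm⟩⟩
    show x ((x ^ 2) u) = 0
    rw [hsq]; exact is3 u
  -- orthogonality facts
  have hBker : ∀ v : V, ∀ w ∈ Kx, B w (x v) = 0 := by
    intro v w hw
    have hw' : x w = 0 := hw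
    have := hskew w v
    rw [hw'] at this
    simpa using this
  have horthKx : B.orthogonal Kx = Rx := by
    symm
    apply Submodule.eq_of_le_of_finrank_le
    · rintro m ⟨v, rfl⟩ w hw
      exact hBker v w hw
    · rw [LinearMap.BilinForm.finrank_orthogonal hnd, hdim, hdimKx, hrk1]
      omega
  have horthR2 : B.orthogonal R2 = K2 := by
    symm
    apply Submodule.eq_of_le_of_finrank_le
    · intro m hm n hn
      obtain ⟨u, rfl⟩ := hn
      show B ((x ^ 2) u) m = 0
      have hm' : (x ^ 2) m = 0 := hm
      have e1 : B (x (x u)) m = - B (x u) (x m) := hskew' (x u) m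
      have e2 : B (x u) (x m) = - B u (x (x m)) := hskew' u (x m)
      rw [hsq, e1, e2, ← hsq, hm']
      simp
    · rw [LinearMap.BilinForm.finrank_orthogonal hnd, hdim, hdimK2, hrk2]
      omega
  -- membership in orthogonal of P
  have hPorth : ∀ m : V, (∀ w ∈ Kx, B w m = 0) → m ∈ B.orthogonal P := by
    intro m hm w hw
    exact hm w hw.1
  have hxVorth : ∀ v : V, x v ∈ B.orthogonal P := fun v =>
    hPorth (x v) (fun w hw => hBker v w hw)
  refine ⟨(P, B.orthogonal P), ⟨?_, hdimP, rfl, ?_, ?_, hxVorth⟩, ?_⟩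
  · -- P is isotropic
    rintro m ⟨hm1, v, rfl⟩
    exact hPorth (x v) (fun w hw => hBker v w hw)
  · intro v hv; exact hv.1
  · -- x maps the orthogonal of P into P
    intro v hv
    have hvK2 : v ∈ K2 := by
      rw [← horthR2]
      exact LinearMap.BilinForm.orthogonal_le hR2P hv
    refine ⟨?_, ⟨v, rfl⟩⟩
    show x (x v) = 0
    rw [← hsq]; exact hvK2
  · -- uniqueness
    rintro ⟨G₁, G₂⟩ ⟨h1, h2, h3, h4, h5, h6⟩
    have h3' : G₂ = B.orthogonal G₁ := h3
    have hG₁Kx : G₁ ≤ Kx := fun v hv => h4 v hv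
    have hG₁P : G₁ ≤ P := by
      by_contra hc
      rw [SetLike.not_le_iff_exists] at hc
      obtain ⟨u₀, hu₀G, hu₀P⟩ := hc
      have hPleKx : P ≤ Kx := inf_le_left
      have hsup : G₁ ⊔ P = Kx := by
        apply Submodule.eq_of_le_of_finrank_le (sup_le hG₁Kx hPleKx)
        have hlt : P < G₁ ⊔ P :=
          lt_of_le_of_ne le_sup_right
            (fun h => hu₀P (h ▸ le_sup_left (α := Submodule ℂ V) hu₀G))
        have := Submodule.finrank_lt_finrank_of_lt hlt
        rw [hdimP] at this
        rw [hdimKx]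
        omega
      -- every element of G₁ is orthogonal to Kx, hence lies in Rx
      have hG₁Rx : G₁ ≤ Rx := by
        intro u hu
        rw [← horthKx]
        intro w hw
        rw [← hsup] at hw
        obtain ⟨g, hg, p, hp, rfl⟩ := Submodule.mem_sup.mp hw
        have hBg : B g u = 0 := by
          have huG₂ : u ∈ G₂ := h1 hu
          rw [h3'] at huG₂
          exact huG₂ g hg
        have hBp : B p u = 0 := by
          obtain ⟨q, rfl⟩ := hp.2
          have h0 := hskew' q u
          rw [show x u = 0 from h4 u hu] at h0
          simpa using h0
        show (B (g + p)) u = 0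
        rw [map_add, LinearMap.add_apply, hBg, hBp, add_zero]
      exact hu₀P (⟨hG₁Kx hu₀G, hG₁Rx hu₀G⟩)
    have hG₁ : G₁ = P :=
      Submodule.eq_of_le_of_finrank_le hG₁P (by rw [hdimP, h2])
    rw [Prod.ext_iff]
    exact ⟨hG₁, by rw [h3', hG₁]⟩
end

section
/- Let n and k be positive integers with k odd and 3k = 2n - 1. Let V be a complex vector space of dimension 2n equipped with a nondegenerate alternating bilinear form B, and let x be a B-skew-adjoint nilpotent endomorphism of V of Jordan type [3^{k-1}, 2, 1^2] (equivalently, x^3 = 0, rank(x^2) = k - 1, and rank(x) = 2k - 1). Then there exists exactly one pair (F_1, F_2) of linear subspaces of V such that F_1 ⊆ F_2, dim F_1 = k, F_2 is the orthogonal complement of F_1 with respect to B, x(F_1) = 0, x(F_2) ⊆ F_1, and x(V) ⊆ F_2. -/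
open Module Submodule LinearMap

/-- Rank–nullity for the restriction of an endomorphism to a submodule. -/
lemma finrank_map_add_finrank_inf_ker {V : Type*} [AddCommGroup V] [Module ℂ V]
    [FiniteDimensional ℂ V] (f : V →ₗ[ℂ] V) (p : Submodule ℂ V) :
    Module.finrank ℂ (p.map f) + Module.finrank ℂ (LinearMap.ker f ⊓ p : Submodule ℂ V)
      = Module.finrank ℂ p := by
  have h := (f.domRestrict p).finrank_range_add_finrank_ker
  rw [LinearMap.range_domRestrict, LinearMap.ker_domRestrict] at h
  have he : comap p.subtype (LinearMap.ker f) = comap p.subtype (LinearMap.ker f ⊓ p) := by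
    rw [Submodule.comap_inf, Submodule.comap_subtype_self, inf_top_eq]
  rw [he, (Submodule.comapSubtypeEquivOfLe (inf_le_right :
      LinearMap.ker f ⊓ p ≤ p)).finrank_eq] at h
  exact h

/-- **Type Cₙ case of the key step of Proposition 3.1** (Namikawa,
"Birational geometry of symplectic resolutions of nilpotent orbits").
Let `n, k > 0` with `k` odd and `3k = 2n - 1`.  Let `V` be a complex vector
space of dimension `2n` with a nondegenerate alternating bilinear form `B`,
and let `x` be a `B`-skew-adjoint nilpotent endomorphism of Jordan type
`[3^{k-1}, 2, 1^2]`, i.e. `x³ = 0`, `rank x² = k - 1` and `rank x = 2k - 1`.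
Then there is exactly one pair `(F₁, F₂)` of subspaces with `F₁ ⊆ F₂`,
`dim F₁ = k`, `F₂ = F₁^⊥`, `x F₁ = 0`, `x F₂ ⊆ F₁` and `x V ⊆ F₂`. -/
theorem unique_isotropic_flag_typeC
    (n k : ℕ) (hn : 0 < n) (hk : 0 < k) (hkodd : Odd k)
    (hnk : 3 * k = 2 * n - 1)
    (V : Type*) [AddCommGroup V] [Module ℂ V] [FiniteDimensional ℂ V]
    (hdim : Module.finrank ℂ V = 2 * n)
    (B : LinearMap.BilinForm ℂ V)
    (halt : ∀ v : V, B v v = 0)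
    (hnd : B.Nondegenerate)
    (x : V →ₗ[ℂ] V)
    (hskew : ∀ v w : V, B (x v) w + B v (x w) = 0)
    (hx3 : x ^ 3 = 0)
    (hrk2 : Module.finrank ℂ (LinearMap.range (x ^ 2)) = k - 1)
    (hrk1 : Module.finrank ℂ (LinearMap.range x) = 2 * k - 1) :
    ∃! F : Submodule ℂ V × Submodule ℂ V,
      F.1 ≤ F.2 ∧
      Module.finrank ℂ F.1 = k ∧
      F.2 = B.orthogonal F.1 ∧
      (∀ v ∈ F.1, x v = 0) ∧
      (∀ v ∈ F.2, x v ∈ F.1) ∧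
      (∀ v : V, x v ∈ F.2) := by
  have hBalt : B.IsAlt := halt
  have hrefl : B.IsRefl := hBalt.isRefl
  -- basic numerology
  have hdim' : Module.finrank ℂ V = 3 * k + 1 := by omega
  -- skew-adjointness in a convenient form
  have hsk : ∀ v w : V, B (x v) w = - B v (x w) := fun v w =>
    eq_neg_of_add_eq_zero_left (hskew v w)
  have hsk2 : ∀ v w : V, B (x (x v)) w = B v (x (x w)) := by
    intro v w
    rw [hsk (x v) w, hsk v (x w), neg_neg]
  -- x³ = 0 pointwise
  have hx3' : ∀ v : V, x (x (x v)) = 0 := by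
    intro v
    have := LinearMap.congr_fun hx3 v
    simpa [pow_succ, Module.End.mul_apply] using this
  -- x² as a composition
  have hx2eq : LinearMap.range (x ^ 2) = (LinearMap.range x).map x := by
    rw [pow_two, Module.End.mul_eq_comp, LinearMap.range_comp]
  have hx2mem : ∀ v : V, x (x v) ∈ LinearMap.range (x ^ 2) := by
    intro v
    rw [hx2eq]
    exact Submodule.mem_map_of_mem (LinearMap.mem_range_self x v)
  -- kernel = orthogonal of range
  have hker_orth : LinearMap.ker x = B.orthogonal (LinearMap.range x) := by
    apply le_antisymm
    · intro v hv
      rintro m ⟨w, rfl⟩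
      show B (x w) v = 0
      rw [hsk w v, LinearMap.mem_ker.1 hv, map_zero, neg_zero]
    · intro v hv
      have h1 : ∀ w : V, B w (x v) = 0 := by
        intro w
        have h0 : B (x w) v = 0 := hv (x w) (LinearMap.mem_range_self x w)
        have := hskew w v
        rw [h0, zero_add] at this
        exact this
      have h2 : ∀ w : V, B (x v) w = 0 := fun w => hrefl w (x v) (h1 w)
      exact LinearMap.mem_ker.2 (hnd.1 (x v) h2)
  -- orthogonal of range x² is contained in ker x²
  have hK2 : B.orthogonal (LinearMap.range (x ^ 2)) ≤ LinearMap.ker (x ^ 2) := by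
    intro v hv
    have h1 : ∀ w : V, B w (x (x v)) = 0 := by
      intro w
      have h0 : B (x (x w)) v = 0 := hv _ (hx2mem w)
      rw [hsk2 w v] at h0
      exact h0
    have h2 : ∀ w : V, B (x (x v)) w = 0 := fun w => hrefl w _ (h1 w)
    have h3 : x (x v) = 0 := hnd.1 _ h2
    show (x ^ 2) v = 0
    simpa [pow_two, Module.End.mul_apply] using h3
  -- dimensions of kernels via rank-nullity
  have hk1 : Module.finrank ℂ (LinearMap.ker x) = k + 2 := by
    have := x.finrank_range_add_finrank_ker
    omega
  -- candidate subspace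
  set F₁ : Submodule ℂ V := LinearMap.ker x ⊓ LinearMap.range x with hF₁
  have hR2F : LinearMap.range (x ^ 2) ≤ F₁ := by
    rintro m ⟨w, rfl⟩
    have h1 : (x ^ 2) w = x (x w) := by simp [pow_two, Module.End.mul_apply]
    constructor
    · show x ((x ^ 2) w) = 0
      rw [h1]; exact hx3' w
    · rw [h1]; exact LinearMap.mem_range_self x (x w)
  -- dimension of F₁
  have hdimF : Module.finrank ℂ F₁ = k := by
    have h := finrank_map_add_finrank_inf_ker x (LinearMap.range x)
    rw [← hx2eq] at h
    rw [hrk1, hrk2] at h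
    have : Module.finrank ℂ F₁ =
        Module.finrank ℂ (LinearMap.ker x ⊓ LinearMap.range x : Submodule ℂ V) := rfl
    omega
  -- orthogonal dimensions
  have horthdim : ∀ W : Submodule ℂ V,
      Module.finrank ℂ (B.orthogonal W) = Module.finrank ℂ V - Module.finrank ℂ W :=
    fun W => LinearMap.BilinForm.finrank_orthogonal hnd W
  -- existence data
  have hmain : ∀ G : Submodule ℂ V, Module.finrank ℂ G = k →
      (∀ v ∈ G, x v = 0) → (∀ v ∈ B.orthogonal G, x v ∈ G) →
      (∀ v : V, x v ∈ B.orthogonal G) → G = F₁ := by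
    intro G hdimG hker hmap hrange
    -- range x² ≤ G
    have hR2G : LinearMap.range (x ^ 2) ≤ G := by
      rintro m ⟨w, rfl⟩
      have h1 : (x ^ 2) w = x (x w) := by simp [pow_two, Module.End.mul_apply]
      rw [h1]
      exact hmap (x w) (hrange w)
    have hGK : G ≤ LinearMap.ker x := fun v hv => LinearMap.mem_ker.2 (hker v hv)
    -- the key dimension count
    have hd1 : Module.finrank ℂ (G ⊓ LinearMap.range x : Submodule ℂ V) ≤ k := by
      rw [← hdimG]; exact Submodule.finrank_mono inf_le_left
    have hd2 : k - 1 ≤ Module.finrank ℂ (G ⊓ LinearMap.range x : Submodule ℂ V) := by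
      rw [← hrk2]
      refine Submodule.finrank_mono (le_inf hR2G ?_)
      rintro m ⟨w, rfl⟩
      have h1 : (x ^ 2) w = x (x w) := by simp [pow_two, Module.End.mul_apply]
      rw [h1]; exact LinearMap.mem_range_self x (x w)
    -- G₂ ⊓ ker x = orthogonal (G ⊔ range x)
    have hinf : B.orthogonal G ⊓ LinearMap.ker x = B.orthogonal (G ⊔ LinearMap.range x) := by
      apply le_antisymm
      · rintro m ⟨h1, h2⟩
        rw [hker_orth] at h2
        intro u hu
        rcases Submodule.mem_sup.1 hu with ⟨a, ha, b, hb, rfl⟩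
        have : B (a + b) m = B a m + B b m := by
          rw [map_add, LinearMap.add_apply]
        rw [this, h1 a ha, h2 b hb, add_zero]
      · intro m hm
        refine ⟨fun u hu => hm u (Submodule.mem_sup_left hu), ?_⟩
        rw [hker_orth]
        exact fun u hu => hm u (Submodule.mem_sup_right hu)
    have hsup : Module.finrank ℂ (G ⊔ LinearMap.range x : Submodule ℂ V)
        + Module.finrank ℂ (G ⊓ LinearMap.range x : Submodule ℂ V)
        = k + (2 * k - 1) := by
      rw [Submodule.finrank_sup_add_finrank_inf_eq, hdimG, hrk1]
    have hsuple : Module.finrank ℂ (G ⊔ LinearMap.range x : Submodule ℂ V)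
        ≤ Module.finrank ℂ V := Submodule.finrank_le _
    -- rank-nullity for x on B.orthogonal G
    have hrn := finrank_map_add_finrank_inf_ker x (B.orthogonal G)
    have hmaple : Module.finrank ℂ ((B.orthogonal G).map x)
        ≤ Module.finrank ℂ (G ⊓ LinearMap.range x : Submodule ℂ V) := by
      refine Submodule.finrank_mono ?_
      rintro m ⟨w, hw, rfl⟩
      exact ⟨hmap w hw, LinearMap.mem_range_self x w⟩
    have hOGdim : Module.finrank ℂ (B.orthogonal G)
        = Module.finrank ℂ V - k := by rw [horthdim, hdimG]
    have hinfdim : Module.finrank ℂ (LinearMap.ker x ⊓ B.orthogonal G : Submodule ℂ V)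
        = Module.finrank ℂ V
          - Module.finrank ℂ (G ⊔ LinearMap.range x : Submodule ℂ V) := by
      rw [inf_comm, hinf, horthdim]
    -- conclude d = k
    have hGle : Module.finrank ℂ G ≤
        Module.finrank ℂ (G ⊓ LinearMap.range x : Submodule ℂ V) := by omega
    have hGR : G ⊓ LinearMap.range x = G :=
      Submodule.eq_of_le_of_finrank_le inf_le_left hGle
    have hGF : G ≤ F₁ := le_inf hGK (by rw [← hGR]; exact inf_le_right)
    exact Submodule.eq_of_le_of_finrank_le hGF (by omega)
  refine ⟨(F₁, B.orthogonal F₁), ⟨?_, hdimF, rfl, ?_, ?_, ?_⟩, ?_⟩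
  · -- F₁ isotropic
    rintro v ⟨hv1, hv2⟩
    rintro m ⟨_, a, rfl⟩
    show B (x a) v = 0
    rw [hsk a v, LinearMap.mem_ker.1 hv1, map_zero, neg_zero]
  · exact fun v hv => LinearMap.mem_ker.1 hv.1
  · -- x (orthogonal F₁) ⊆ F₁
    intro v hv
    have hvK2 : v ∈ LinearMap.ker (x ^ 2) := by
      refine hK2 ?_
      exact fun m hm => hv m (hR2F hm)
    constructor
    · show x (x v) = 0
      have : (x ^ 2) v = 0 := LinearMap.mem_ker.1 hvK2
      simpa [pow_two, Module.End.mul_apply] using this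
    · exact LinearMap.mem_range_self x v
  · -- x V ⊆ orthogonal F₁
    intro v
    rintro m ⟨hm1, _⟩
    show B m (x v) = 0
    have := hskew m v
    rw [LinearMap.mem_ker.1 hm1, map_zero, LinearMap.zero_apply, zero_add] at this
    exact this
  · -- uniqueness
    rintro ⟨G₁, G₂⟩ ⟨hle, hdimG, hG2, hker, hmap, hrange⟩
    have hG1 : G₁ = F₁ := by
      refine hmain G₁ hdimG hker ?_ ?_
      · rw [← hG2]; exact hmap
      · intro v; rw [← hG2]; exact hrange v
    simp only [Prod.mk.injEq]
    exact ⟨hG1, hG2.trans (by rw [hG1])⟩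
end

section
/- Let V be a complex vector space of dimension 2n + 2 equipped with a nondegenerate symmetric bilinear form B, and let V' ⊆ V be a linear subspace of dimension 2n + 1 such that the restriction of B to V' is nondegenerate. If W ⊆ V is an isotropic subspace of dimension n + 1, then W ∩ V' is an isotropic subspace of V' of dimension n. -/
/-- **The correspondence underlying Example 3.4** (Namikawa).  Let `V` be a
complex vector space of dimension `2n + 2` with a nondegenerate symmetric
bilinear form `B`, and let `V' ⊆ V` be a subspace of dimension `2n + 1` on
which `B` restricts to a nondegenerate form.  If `W ⊆ V` is an isotropic
subspace of dimension `n + 1`, then `W ∩ V'` is an isotropic subspace of `V'`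
of dimension `n`. -/
theorem isotropic_inter_hyperplane
    (n : ℕ)
    (V : Type*) [AddCommGroup V] [Module ℂ V] [FiniteDimensional ℂ V]
    (hdim : Module.finrank ℂ V = 2 * n + 2)
    (B : LinearMap.BilinForm ℂ V)
    (hsymm : ∀ v w : V, B v w = B w v)
    (hnd : B.Nondegenerate)
    (V' : Submodule ℂ V)
    (hV'dim : Module.finrank ℂ V' = 2 * n + 1)
    (hV'nd : (B.restrict V').Nondegenerate)
    (W : Submodule ℂ V)
    (hWiso : ∀ u ∈ W, ∀ v ∈ W, B u v = 0)
    (hWdim : Module.finrank ℂ W = n + 1) :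
    (∀ u ∈ W ⊓ V', ∀ v ∈ W ⊓ V', B u v = 0) ∧
      Module.finrank ℂ ↥(W ⊓ V') = n := by
  constructor
  · intro u hu v hv
    exact hWiso u hu.1 v hv.1
  · -- First show W is not contained in V'
    have hrefl : (B.restrict V').IsRefl := by
      intro x y h
      simpa [LinearMap.BilinForm.restrict_apply, hsymm (y : V) x] using h
    have hnotle : ¬ W ≤ V' := by
      intro hle
      set W' : Submodule ℂ V' := W.comap V'.subtype with hW'
      have hW'dim : Module.finrank ℂ W' = n + 1 := by
        rw [← hWdim]
        exact (Submodule.comapSubtypeEquivOfLe hle).finrank_eq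
      have horth : W' ≤ (B.restrict V').orthogonal W' := by
        intro x hx y hy
        have : B (y : V) (x : V) = 0 := hWiso _ hy _ hx
        simpa [LinearMap.BilinForm.restrict_apply] using this
      have h1 : Module.finrank ℂ W' ≤
          Module.finrank ℂ ((B.restrict V').orthogonal W') :=
        Submodule.finrank_mono horth
      rw [LinearMap.BilinForm.finrank_orthogonal hV'nd, hV'dim, hW'dim] at h1
      omega
    have hlt : V' < W ⊔ V' := by
      refine lt_of_le_of_ne le_sup_right ?_
      intro h
      exact hnotle (h ▸ le_sup_left)
    have h2 : Module.finrank ℂ ↥V' < Module.finrank ℂ ↥(W ⊔ V') :=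
      Submodule.finrank_lt_finrank_of_lt hlt
    have h3 : Module.finrank ℂ ↥(W ⊔ V') ≤ Module.finrank ℂ V :=
      Submodule.finrank_le _
    have h4 := Submodule.finrank_sup_add_finrank_inf_eq W V'
    omega
end

section
/- Let V be a complex vector space of dimension 2n + 2 equipped with a nondegenerate symmetric bilinear form B, and let V' ⊆ V be a linear subspace of dimension 2n + 1 such that the restriction of B to V' is nondegenerate. Then for every isotropic subspace U ⊆ V' of dimension n, there exist exactly two isotropic subspaces W ⊆ V of dimension n + 1 with W ∩ V' = U. -/
open Module Submodule

/-- **The two-to-one correspondence of Example 3.4** (Namikawa).  Let `V` be a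
complex vector space of dimension `2n + 2` with a nondegenerate symmetric
bilinear form `B`, and let `V' ⊆ V` be a subspace of dimension `2n + 1` on
which `B` restricts to a nondegenerate form.  Then for every isotropic subspace
`U ⊆ V'` of dimension `n` there are exactly two isotropic subspaces `W ⊆ V` of
dimension `n + 1` with `W ∩ V' = U` (they lie in the two connected components
of the orthogonal Grassmannian). -/
theorem two_isotropic_extensions
    (n : ℕ)
    (V : Type*) [AddCommGroup V] [Module ℂ V] [FiniteDimensional ℂ V]
    (hdim : Module.finrank ℂ V = 2 * n + 2)
    (B : LinearMap.BilinForm ℂ V)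
    (hsymm : ∀ v w : V, B v w = B w v)
    (hnd : B.Nondegenerate)
    (V' : Submodule ℂ V)
    (hV'dim : Module.finrank ℂ V' = 2 * n + 1)
    (hV'nd : (B.restrict V').Nondegenerate)
    (U : Submodule ℂ V) (hUV' : U ≤ V')
    (hUiso : ∀ u ∈ U, ∀ v ∈ U, B u v = 0)
    (hUdim : Module.finrank ℂ U = n) :
    ∃ W₁ W₂ : Submodule ℂ V, W₁ ≠ W₂ ∧
      ∀ W : Submodule ℂ V,
        ((∀ u ∈ W, ∀ v ∈ W, B u v = 0) ∧
            Module.finrank ℂ W = n + 1 ∧ W ⊓ V' = U)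
          ↔ (W = W₁ ∨ W = W₂) := by
  classical
  have hrefl : B.IsRefl := fun v w h => by rw [hsymm]; exact h
  set L := B.orthogonal V' with hLdef
  have hcompl : IsCompl V' L :=
    B.isCompl_orthogonal_of_restrict_nondegenerate hrefl hV'nd
  have hLdim : finrank ℂ L = 1 := by
    rw [hLdef, LinearMap.BilinForm.finrank_orthogonal hnd, hdim, hV'dim]; omega
  -- pick a spanning vector e of L
  have hLne : L ≠ ⊥ := by
    intro h; rw [h, finrank_bot] at hLdim; exact one_ne_zero hLdim.symm
  obtain ⟨e, heL, hene⟩ := Submodule.exists_mem_ne_zero_of_ne_bot hLne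
  have hLspan : L = span ℂ {e} := by
    refine (Submodule.eq_of_le_of_finrank_le ?_ ?_).symm
    · rwa [span_le, Set.singleton_subset_iff]
    · rw [hLdim, finrank_span_singleton hene]
  -- e is orthogonal to V'
  have heV' : ∀ v ∈ V', B v e = 0 := fun v hv => heL v hv
  have heV'' : ∀ v ∈ V', B e v = 0 := fun v hv => by rw [hsymm]; exact heV' v hv
  have heNotV' : e ∉ V' := by
    intro h
    exact hene (hcompl.disjoint.eq_bot ▸ Submodule.mem_inf.mpr ⟨h, heL⟩ : e ∈ (⊥ : Submodule ℂ V))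
  -- B e e ≠ 0
  have hBee : B e e ≠ 0 := by
    intro h0
    apply hene
    apply hnd.1 e
    intro v
    have hv : v ∈ V' ⊔ L := hcompl.sup_eq_top ▸ Submodule.mem_top
    obtain ⟨v', hv', l, hl, rfl⟩ := Submodule.mem_sup.mp hv
    obtain ⟨t, rfl⟩ := Submodule.mem_span_singleton.mp (hLspan ▸ hl)
    simp only [map_add, LinearMap.add_apply, map_smul, LinearMap.smul_apply, smul_eq_mul]
    rw [heV'' v' hv', h0]
    ring
  -- K = orthogonal of U inside V'
  set K := B.orthogonal U ⊓ V' with hKdef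
  have hUK : U ≤ K := by
    intro u hu
    exact Submodule.mem_inf.mpr ⟨fun m hm => hUiso m hm u hu, hUV' hu⟩
  have hLleOrthU : L ≤ B.orthogonal U := LinearMap.BilinForm.orthogonal_le hUV'
  have hKL : K ⊓ L = ⊥ := by
    rw [eq_bot_iff]
    intro y hy
    exact hcompl.disjoint.eq_bot ▸
      (Submodule.mem_inf.mpr ⟨(Submodule.mem_inf.mp hy.1).2, hy.2⟩)
  have hOrthU : B.orthogonal U = K ⊔ L := by
    apply le_antisymm
    · intro y hy
      have : y ∈ V' ⊔ L := hcompl.sup_eq_top ▸ Submodule.mem_top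
      obtain ⟨v', hv', l, hl, rfl⟩ := Submodule.mem_sup.mp this
      have hv'O : v' ∈ B.orthogonal U := by
        have hlO : l ∈ B.orthogonal U := hLleOrthU hl
        simpa using Submodule.sub_mem _ hy hlO
      exact Submodule.mem_sup.mpr ⟨v', Submodule.mem_inf.mpr ⟨hv'O, hv'⟩, l, hl, rfl⟩
    · exact sup_le inf_le_left hLleOrthU
  have hOrthUdim : finrank ℂ (B.orthogonal U) = n + 2 := by
    rw [LinearMap.BilinForm.finrank_orthogonal hnd, hdim, hUdim]; omega
  have hKdim : finrank ℂ K = n + 1 := by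
    have := Submodule.finrank_sup_add_finrank_inf_eq K L
    rw [hKL, finrank_bot, ← hOrthU, hOrthUdim, hLdim] at this
    omega
  -- pick v₀ ∈ K \ U
  have hUltK : U < K := lt_of_le_of_ne hUK (by
    intro h; rw [← h, hUdim] at hKdim; omega)
  obtain ⟨v₀, hv₀K, hv₀U⟩ := SetLike.exists_of_lt hUltK
  have hv₀V' : v₀ ∈ V' := (Submodule.mem_inf.mp hv₀K).2
  have hUv₀ : ∀ u ∈ U, B u v₀ = 0 := fun u hu => (Submodule.mem_inf.mp hv₀K).1 u hu
  have hv₀U' : ∀ u ∈ U, B v₀ u = 0 := fun u hu => by rw [hsymm]; exact hUv₀ u hu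
  have hv₀ne : v₀ ≠ 0 := fun h => hv₀U (h ▸ U.zero_mem)
  -- helper: disjointness and finrank of U ⊔ span {w} for w ∉ U
  have hdisj : ∀ w : V, w ∉ U → U ⊓ span ℂ {w} = ⊥ := by
    intro w hw
    rw [eq_bot_iff]
    intro y hy
    obtain ⟨a, rfl⟩ := Submodule.mem_span_singleton.mp hy.2
    rcases eq_or_ne a 0 with rfl | ha
    · simpa using Submodule.mem_bot ℂ |>.mpr rfl
    · exact absurd (by simpa [smul_smul, inv_mul_cancel₀ ha] using U.smul_mem a⁻¹ hy.1) hw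
  have hfr : ∀ w : V, w ∉ U → finrank ℂ (U ⊔ span ℂ {w} : Submodule ℂ V) = n + 1 := by
    intro w hw
    have hwne : w ≠ 0 := fun h => hw (h ▸ U.zero_mem)
    have := Submodule.finrank_sup_add_finrank_inf_eq U (span ℂ {w})
    rw [hdisj w hw, finrank_bot, hUdim, finrank_span_singleton hwne] at this
    omega
  -- K = U ⊔ span v₀
  have hKeq : K = U ⊔ span ℂ {v₀} := by
    refine (Submodule.eq_of_le_of_finrank_le ?_ ?_).symm
    · exact sup_le hUK ((span_le).mpr (Set.singleton_subset_iff.mpr hv₀K))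
    · rw [hKdim, hfr v₀ hv₀U]
  -- B v₀ v₀ ≠ 0
  have hBv₀ : B v₀ v₀ ≠ 0 := by
    intro h0
    apply hv₀U
    -- v₀ ∈ orthogonal (K ⊔ L) = U
    have hMdim : finrank ℂ (K ⊔ L : Submodule ℂ V) = n + 2 := by
      have := Submodule.finrank_sup_add_finrank_inf_eq K L
      rw [hKL, finrank_bot, hKdim, hLdim] at this; omega
    have hUM : U ≤ B.orthogonal (K ⊔ L) := by
      intro u hu m hm
      obtain ⟨k, hk, l, hl, rfl⟩ := Submodule.mem_sup.mp hm
      have h1 : B k u = 0 := by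
        rw [hsymm]; exact (Submodule.mem_inf.mp hk).1 u hu
      have h2 : B l u = 0 := by
        rw [hsymm]
        obtain ⟨t, rfl⟩ := Submodule.mem_span_singleton.mp (hLspan ▸ hl)
        simp [heV' u (hUV' hu)]
      show B (k + l) u = 0
      simp [LinearMap.add_apply, h1, h2]
    have hUMeq : U = B.orthogonal (K ⊔ L) := by
      apply Submodule.eq_of_le_of_finrank_le hUM
      rw [LinearMap.BilinForm.finrank_orthogonal hnd, hMdim, hdim, hUdim]
      omega
    rw [hUMeq]
    intro m hm
    obtain ⟨k, hk, l, hl, rfl⟩ := Submodule.mem_sup.mp hm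
    have h1 : B k v₀ = 0 := by
      rw [hKeq] at hk
      obtain ⟨u, hu, z, hz, rfl⟩ := Submodule.mem_sup.mp hk
      obtain ⟨t, rfl⟩ := Submodule.mem_span_singleton.mp hz
      simp [LinearMap.add_apply, hUv₀ u hu, h0]
    have h2 : B l v₀ = 0 := by
      rw [hsymm]
      obtain ⟨t, rfl⟩ := Submodule.mem_span_singleton.mp (hLspan ▸ hl)
      simp [heV' v₀ hv₀V']
    show B (k + l) v₀ = 0
    simp [LinearMap.add_apply, h1, h2]
  -- square root
  obtain ⟨x, hx2⟩ := IsAlgClosed.exists_pow_nat_eq (k := ℂ) (-(B e e) / (B v₀ v₀)) (n := 2)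
    (by norm_num)
  have hxkey : x ^ 2 * B v₀ v₀ + B e e = 0 := by
    rw [hx2]; field_simp; ring
  have hxne : x ≠ 0 := by
    intro h
    rw [h] at hx2
    simp only [ne_eq, zero_pow, OfNat.ofNat_ne_zero, not_false_eq_true] at hx2
    have := div_eq_zero_iff.mp hx2.symm
    rcases this with h | h
    · exact hBee (neg_eq_zero.mp h)
    · exact hBv₀ h
  -- the two extensions
  have hv₀e : B v₀ e = 0 := heV' v₀ hv₀V'
  have hev₀ : B e v₀ = 0 := heV'' v₀ hv₀V'
  -- the key classification, for parameter t with t² Bv₀v₀ + Bee = 0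
  set w₁ := x • v₀ + e with hw₁def
  set w₂ := (-x) • v₀ + e with hw₂def
  refine ⟨U ⊔ span ℂ {w₁}, U ⊔ span ℂ {w₂}, ?_, ?_⟩
  · -- W₁ ≠ W₂
    intro h
    have hw₁mem : w₁ ∈ U ⊔ span ℂ {w₂} := h ▸ Submodule.mem_sup_right (mem_span_singleton_self w₁)
    obtain ⟨u, hu, z, hz, hzeq⟩ := Submodule.mem_sup.mp hw₁mem
    obtain ⟨t, rfl⟩ := Submodule.mem_span_singleton.mp hz
    -- w₁ - t • w₂ = u ∈ U ≤ V'; compute its e-component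
    have : (x + t * x) • v₀ + (1 - t) • e = u := by
      rw [hw₁def, hw₂def] at hzeq
      rw [eq_sub_of_add_eq hzeq]
      module
    have hev : (1 - t) • e ∈ V' := by
      have h1 : u - (x + t * x) • v₀ ∈ V' :=
        Submodule.sub_mem _ (hUV' hu) (Submodule.smul_mem _ _ hv₀V')
      have : (1 - t) • e = u - (x + t * x) • v₀ := by
        rw [← this]; abel
      rw [this]; exact h1
    have heL' : (1 - t) • e ∈ L := Submodule.smul_mem _ _ heL
    have hbot : (1 - t) • e = 0 := by
      have := hcompl.disjoint.eq_bot ▸ Submodule.mem_inf.mpr ⟨hev, heL'⟩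
      simpa using this
    have ht1 : t = 1 := by
      rcases smul_eq_zero.mp hbot with h | h
      · exact (sub_eq_zero.mp h).symm ▸ rfl
      · exact absurd h hene
    rw [ht1] at this
    have h2x : (2 * x) • v₀ ∈ U := by
      have h0 : (x + 1 * x) • v₀ + (1 - 1 : ℂ) • e = (2 * x) • v₀ := by
        module
      rw [← h0]; rw [this]; exact hu
    have : v₀ ∈ U := by
      have h2 : (2 * x : ℂ) ≠ 0 := by
        simp [hxne]
      have := U.smul_mem (2 * x)⁻¹ h2x
      rwa [smul_smul, inv_mul_cancel₀ h2, one_smul] at this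
    exact hv₀U this
  · -- the iff for all W
    -- common facts about w(t) := t • v₀ + e for t² Bv₀v₀ + Bee = 0
    have hwprops : ∀ t : ℂ, t ^ 2 * B v₀ v₀ + B e e = 0 →
        (∀ a ∈ U ⊔ span ℂ {t • v₀ + e}, ∀ b ∈ U ⊔ span ℂ {t • v₀ + e}, B a b = 0) ∧
        finrank ℂ (U ⊔ span ℂ {t • v₀ + e} : Submodule ℂ V) = n + 1 ∧
        (U ⊔ span ℂ {t • v₀ + e}) ⊓ V' = U := by
      intro t ht
      set w := t • v₀ + e with hwdef
      have hwV' : w ∉ V' := by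
        intro h
        apply heNotV'
        have : e = w - t • v₀ := by rw [hwdef]; abel
        rw [this]
        exact Submodule.sub_mem _ h (Submodule.smul_mem _ _ hv₀V')
      have hwU : w ∉ U := fun h => hwV' (hUV' h)
      refine ⟨?_, hfr w hwU, ?_⟩
      · -- isotropy
        intro a ha b hb
        obtain ⟨u₁, hu₁, z₁, hz₁, rfl⟩ := Submodule.mem_sup.mp ha
        obtain ⟨u₂, hu₂, z₂, hz₂, rfl⟩ := Submodule.mem_sup.mp hb
        obtain ⟨s₁, rfl⟩ := Submodule.mem_span_singleton.mp hz₁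
        obtain ⟨s₂, rfl⟩ := Submodule.mem_span_singleton.mp hz₂
        have hBu₁w : B u₁ w = 0 := by
          simp [hwdef, hUv₀ u₁ hu₁, heV' u₁ (hUV' hu₁)]
        have hBwu₂ : B w u₂ = 0 := by
          simp [hwdef, hv₀U' u₂ hu₂, heV'' u₂ (hUV' hu₂)]
        have hBww : B w w = 0 := by
          simp only [hwdef, map_add, LinearMap.add_apply, map_smul, LinearMap.smul_apply,
            smul_eq_mul]
          rw [hv₀e, hev₀]
          linear_combination ht
        simp only [map_add, LinearMap.add_apply, map_smul, LinearMap.smul_apply, smul_eq_mul]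
        rw [hUiso u₁ hu₁ u₂ hu₂, hBu₁w, hBwu₂, hBww]
        ring
      · -- intersection with V' is U
        apply le_antisymm
        · intro y hy
          obtain ⟨hy1, hy2⟩ := Submodule.mem_inf.mp hy
          obtain ⟨u, hu, z, hz, rfl⟩ := Submodule.mem_sup.mp hy1
          obtain ⟨s, rfl⟩ := Submodule.mem_span_singleton.mp hz
          have hse : s • e ∈ V' := by
            have : s • e = (u + s • w) - u - (s * t) • v₀ := by
              rw [hwdef]; rw [smul_add, smul_smul]; abel
            rw [this]
            exact Submodule.sub_mem _ (Submodule.sub_mem _ hy2 (hUV' hu))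
              (Submodule.smul_mem _ _ hv₀V')
          have hbot : s • e = 0 := by
            have := hcompl.disjoint.eq_bot ▸
              Submodule.mem_inf.mpr ⟨hse, Submodule.smul_mem L s heL⟩
            simpa using this
          rcases smul_eq_zero.mp hbot with h | h
          · rw [h, zero_smul, add_zero]; exact hu
          · exact absurd h hene
        · exact le_inf le_sup_left hUV'
    have hx2key : x ^ 2 * B v₀ v₀ + B e e = 0 := hxkey
    have hnx2key : (-x) ^ 2 * B v₀ v₀ + B e e = 0 := by rw [neg_pow]; simpa using hxkey
    obtain ⟨hiso₁, hfr₁, hinf₁⟩ := hwprops x hx2key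
    obtain ⟨hiso₂, hfr₂, hinf₂⟩ := hwprops (-x) hnx2key
    intro W
    constructor
    · rintro ⟨hWiso, hWdim, hWinf⟩
      have hUW : U ≤ W := hWinf ▸ inf_le_left
      -- find w ∈ W, w ∉ V'
      have hnotle : ¬ W ≤ V' := by
        intro h
        have hWU : W = U := by rw [← hWinf, inf_eq_left.mpr h]
        rw [hWU, hUdim] at hWdim
        omega
      obtain ⟨w, hwW, hwV'⟩ := SetLike.not_le_iff_exists.mp hnotle
      obtain ⟨v', hv', l, hl, hwd⟩ := Submodule.mem_sup.mp
        (hcompl.sup_eq_top ▸ Submodule.mem_top : w ∈ V' ⊔ L)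
      obtain ⟨s, rfl⟩ := Submodule.mem_span_singleton.mp (hLspan ▸ hl)
      have hsne : s ≠ 0 := by
        rintro rfl
        apply hwV'
        rw [← hwd]; simpa using hv'
      -- normalize
      set w' := s⁻¹ • w with hw'def
      have hw'W : w' ∈ W := Submodule.smul_mem _ _ hwW
      have hw'V' : w' ∉ V' := by
        intro h
        apply hwV'
        have : w = s • w' := by rw [hw'def, smul_smul, mul_inv_cancel₀ hsne, one_smul]
        rw [this]; exact Submodule.smul_mem _ _ h
      have hw'eq : w' = (s⁻¹ • v') + e := by
        rw [hw'def, ← hwd, smul_add, smul_smul, inv_mul_cancel₀ hsne, one_smul]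
      set v'' := s⁻¹ • v' with hv''def
      have hv''V' : v'' ∈ V' := Submodule.smul_mem _ _ hv'
      have hv''K : v'' ∈ K := by
        refine Submodule.mem_inf.mpr ⟨?_, hv''V'⟩
        intro u hu
        have h1 : B u w' = 0 := hWiso u (hUW hu) w' hw'W
        have h2 : B u e = 0 := heV' u (hUV' hu)
        show B u v'' = 0
        have : B u w' = B u v'' + B u e := by rw [hw'eq]; simp [hv''def]
        rw [this, h2, add_zero] at h1
        exact h1
      rw [hKeq] at hv''K
      obtain ⟨u, hu, z, hz, hv''eq⟩ := Submodule.mem_sup.mp hv''K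
      obtain ⟨t, rfl⟩ := Submodule.mem_span_singleton.mp hz
      -- isotropy gives t² Bv₀v₀ + Bee = 0
      have htkey : t ^ 2 * B v₀ v₀ + B e e = 0 := by
        have h0 : B w' w' = 0 := hWiso w' hw'W w' hw'W
        rw [hw'eq, ← hv''eq] at h0
        simp only [map_add, LinearMap.add_apply, map_smul, LinearMap.smul_apply,
          smul_eq_mul] at h0
        rw [hUiso u hu u hu, hUv₀ u hu, hv₀U' u hu, heV' u (hUV' hu), heV'' u (hUV' hu),
          hv₀e, hev₀] at h0
        linear_combination h0
      -- t = x or t = -x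
      have ht : t = x ∨ t = -x := by
        have : (t - x) * (t + x) = 0 := by
          have h3 : (t ^ 2 - x ^ 2) * B v₀ v₀ = 0 := by linear_combination htkey - hxkey
          have ht2 : t ^ 2 = x ^ 2 := by
            rcases mul_eq_zero.mp h3 with h | h
            · exact sub_eq_zero.mp h
            · exact absurd h hBv₀
          linear_combination ht2
        rcases mul_eq_zero.mp this with h | h
        · exact Or.inl (sub_eq_zero.mp h)
        · exact Or.inr (eq_neg_of_add_eq_zero_left h)
      -- W = U ⊔ span {w'}
      have hw'U : w' ∉ U := fun h => hw'V' (hUV' h)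
      have hWeq : W = U ⊔ span ℂ {w'} := by
        refine (Submodule.eq_of_le_of_finrank_le ?_ ?_).symm
        · exact sup_le hUW ((span_le).mpr (Set.singleton_subset_iff.mpr hw'W))
        · rw [hWdim, hfr w' hw'U]
      have hsupeq : ∀ tt : ℂ, w' = u + (tt • v₀ + e) →
          U ⊔ span ℂ {w'} = U ⊔ span ℂ {tt • v₀ + e} := by
        intro tt hh
        apply le_antisymm
        · refine sup_le le_sup_left ?_
          rw [span_le, Set.singleton_subset_iff, hh]
          exact Submodule.add_mem _ (Submodule.mem_sup_left hu)
            (Submodule.mem_sup_right (mem_span_singleton_self _))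
        · refine sup_le le_sup_left ?_
          rw [span_le, Set.singleton_subset_iff]
          have : tt • v₀ + e = w' - u := by rw [hh]; abel
          rw [this]
          exact Submodule.sub_mem _
            (Submodule.mem_sup_right (mem_span_singleton_self _)) (Submodule.mem_sup_left hu)
      have hw'split : w' = u + (t • v₀ + e) := by
        rw [hw'eq, ← hv''eq]; abel
      rcases ht with rfl | rfl
      · exact Or.inl (hWeq.trans (hsupeq _ hw'split))
      · exact Or.inr (hWeq.trans (hsupeq _ hw'split))
    · rintro (rfl | rfl)
      · exact ⟨hiso₁, hfr₁, hinf₁⟩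
      · exact ⟨hiso₂, hfr₂, hinf₂⟩
end

section
/- Let Φ be a reduced crystallographic root system spanning a finite-dimensional real inner product space E, with Weyl group W generated by the reflections s_α, α ∈ Φ. Let Ψ ⊆ Φ be a parabolic subset, i.e. Ψ is closed (if α, β ∈ Ψ and α + β ∈ Φ then α + β ∈ Ψ) and Ψ ∪ (−Ψ) = Φ. If w ∈ W satisfies w(Ψ) = Ψ, then w lies in the subgroup of W generated by the reflections s_α with α ∈ Ψ ∩ (−Ψ). -/
open scoped RealInnerProductSpace Pointwise

variable {E : Type*} [NormedAddCommGroup E] [InnerProductSpace ℝ E]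

/-- The orthogonal reflection `s_α` in (the hyperplane orthogonal to) a root
`α`, as a map `E → E`. -/
noncomputable def reflectionMap (α v : E) : E :=
  v - (2 * ⟪α, v⟫ / ⟪α, α⟫) • α

/-- `Φ` is a reduced crystallographic root system spanning `E`. -/
structure IsRootSystem (Φ : Set E) : Prop where
  finite : Φ.Finite
  spans : Submodule.span ℝ Φ = ⊤
  nonzero : ∀ α ∈ Φ, α ≠ 0
  reflect_mem : ∀ α ∈ Φ, ∀ β ∈ Φ, reflectionMap α β ∈ Φ
  crystallographic : ∀ α ∈ Φ, ∀ β ∈ Φ, ∃ m : ℤ, 2 * ⟪α, β⟫ / ⟪α, α⟫ = m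
  reduced : ∀ α ∈ Φ, ∀ c : ℝ, c • α ∈ Φ → c = 1 ∨ c = -1

/-- The subgroup of `GL(E)` generated by the reflections `s_α`, `α ∈ S`.
Applied to `S = Φ` it gives the Weyl group `W` of `Φ`. -/
noncomputable def reflectionSubgroup (S : Set E) : Subgroup (E ≃ₗ[ℝ] E) :=
  Subgroup.closure {g : E ≃ₗ[ℝ] E | ∃ α ∈ S, ∀ v : E, g v = reflectionMap α v}


lemma inner_self_pos' {α : E} (hα : α ≠ 0) : (0:ℝ) < ⟪α, α⟫ :=
  lt_of_le_of_ne real_inner_self_nonneg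
    (Ne.symm fun h => hα (inner_self_eq_zero.mp h))

lemma reflectionMap_involutive (α : E) (v : E) :
    reflectionMap α (reflectionMap α v) = v := by
  rcases eq_or_ne α 0 with rfl | hα
  · simp [reflectionMap]
  have hc : ⟪α, α⟫ ≠ (0:ℝ) := (inner_self_pos' hα).ne'
  unfold reflectionMap
  have h1 : ⟪α, v - (2 * ⟪α, v⟫ / ⟪α, α⟫) • α⟫
      = ⟪α, v⟫ - (2 * ⟪α, v⟫ / ⟪α, α⟫) * ⟪α, α⟫ := by
    rw [inner_sub_right, real_inner_smul_right]
  rw [h1]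
  have h2 : 2 * (⟪α, v⟫ - 2 * ⟪α, v⟫ / ⟪α, α⟫ * ⟪α, α⟫) / ⟪α, α⟫
      = -(2 * ⟪α, v⟫ / ⟪α, α⟫) := by
    field_simp
    ring
  rw [h2, neg_smul, sub_neg_eq_add, sub_add_cancel]

lemma reflectionMap_inner (α v w : E) :
    ⟪reflectionMap α v, reflectionMap α w⟫ = ⟪v, w⟫ := by
  rcases eq_or_ne α 0 with rfl | hα
  · simp [reflectionMap]
  have hc : ⟪α, α⟫ ≠ (0:ℝ) := (inner_self_pos' hα).ne'
  unfold reflectionMap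
  simp only [inner_sub_left, inner_sub_right, real_inner_smul_left,
    real_inner_smul_right]
  rw [real_inner_comm v α]
  field_simp
  ring

/-- The reflection `s_α` as a linear equivalence. -/
noncomputable def sE (α : E) : E ≃ₗ[ℝ] E where
  toFun v := reflectionMap α v
  invFun v := reflectionMap α v
  left_inv v := reflectionMap_involutive α v
  right_inv v := reflectionMap_involutive α v
  map_add' v w := by
    show (v + w) - (2 * ⟪α, v + w⟫ / ⟪α, α⟫) • α
      = (v - (2 * ⟪α, v⟫ / ⟪α, α⟫) • α) + (w - (2 * ⟪α, w⟫ / ⟪α, α⟫) • α)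
    rw [inner_add_right,
      show 2 * (⟪α, v⟫ + ⟪α, w⟫) / ⟪α, α⟫
        = 2 * ⟪α, v⟫ / ⟪α, α⟫ + 2 * ⟪α, w⟫ / ⟪α, α⟫ by ring, add_smul]
    abel
  map_smul' c v := by
    show (c • v) - (2 * ⟪α, c • v⟫ / ⟪α, α⟫) • α
      = c • (v - (2 * ⟪α, v⟫ / ⟪α, α⟫) • α)
    rw [real_inner_smul_right,
      show 2 * (c * ⟪α, v⟫) / ⟪α, α⟫ = c * (2 * ⟪α, v⟫ / ⟪α, α⟫) by ring,
      smul_sub, smul_smul]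

@[simp] lemma sE_apply (α v : E) : sE α v = reflectionMap α v := rfl

lemma sE_sE (α v : E) : sE α (sE α v) = v := reflectionMap_involutive α v

lemma sE_inv (α : E) : (sE α)⁻¹ = sE α := by
  ext v
  have h : sE α (sE α v) = v := sE_sE α v
  calc (sE α)⁻¹ v = (sE α)⁻¹ (sE α (sE α v)) := by rw [h]
    _ = sE α v := by
        rw [show ((sE α)⁻¹ : E ≃ₗ[ℝ] E) ((sE α) ((sE α) v)) = sE α v from
          (sE α).symm_apply_apply _]

lemma sE_self {α : E} (hα : α ≠ 0) : sE α α = -α := by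
  have hc : ⟪α, α⟫ ≠ (0:ℝ) := (inner_self_pos' hα).ne'
  show reflectionMap α α = -α
  unfold reflectionMap
  rw [show 2 * ⟪α, α⟫ / ⟪α, α⟫ = (2:ℝ) by field_simp, two_smul]
  abel

lemma sE_inner (α : E) (v w : E) : ⟪sE α v, sE α w⟫ = ⟪v, w⟫ :=
  reflectionMap_inner α v w

lemma sE_of_inner_eq_zero (α : E) {v : E} (h : ⟪α, v⟫ = 0) : sE α v = v := by
  show reflectionMap α v = v
  unfold reflectionMap
  rw [h]
  simp



lemma gen_eq_sE {S : Set E} {g : E ≃ₗ[ℝ] E}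
    (hg : g ∈ {g : E ≃ₗ[ℝ] E | ∃ α ∈ S, ∀ v : E, g v = reflectionMap α v}) :
    ∃ α ∈ S, g = sE α := by
  obtain ⟨α, hα, h⟩ := hg
  refine ⟨α, hα, ?_⟩
  ext v
  rw [h v, sE_apply]

lemma sE_mem_reflectionSubgroup {S : Set E} {α : E} (h : α ∈ S) :
    sE α ∈ reflectionSubgroup S :=
  Subgroup.subset_closure ⟨α, h, fun v => by rw [sE_apply]⟩

lemma W_inner {S : Set E} {w : E ≃ₗ[ℝ] E} (hw : w ∈ reflectionSubgroup S) :
    ∀ v u : E, ⟪w v, w u⟫ = ⟪v, u⟫ := by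
  induction hw using Subgroup.closure_induction with
  | mem g hg =>
      obtain ⟨α, -, rfl⟩ := gen_eq_sE hg
      exact sE_inner α
  | one => intro v u; rfl
  | mul g h _ _ hg hh =>
      intro v u
      have : (g * h) v = g (h v) := rfl
      rw [this, show (g * h) u = g (h u) from rfl, hg, hh]
  | inv g _ hg =>
      intro v u
      have := hg (g⁻¹ v) (g⁻¹ u)
      rwa [show g (g⁻¹ v) = v from g.apply_symm_apply v,
        show g (g⁻¹ u) = u from g.apply_symm_apply u, eq_comm] at this

lemma W_maps (hΦ : IsRootSystem Φ) {w : E ≃ₗ[ℝ] E} (hw : w ∈ reflectionSubgroup Φ) :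
    ∀ α ∈ Φ, w α ∈ Φ := by
  have key : ∀ w ∈ reflectionSubgroup Φ, (∀ α ∈ Φ, w α ∈ Φ) ∧ (∀ α ∈ Φ, w⁻¹ α ∈ Φ) := by
    intro w hw
    induction hw using Subgroup.closure_induction with
    | mem g hg =>
        obtain ⟨α, hα, rfl⟩ := gen_eq_sE hg
        constructor
        · intro β hβ; rw [sE_apply]; exact hΦ.reflect_mem α hα β hβ
        · intro β hβ; rw [sE_inv, sE_apply]; exact hΦ.reflect_mem α hα β hβ
    | one => exact ⟨fun α h => h, fun α h => h⟩
    | mul g h _ _ hg hh =>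
        refine ⟨fun α hα => hg.1 _ (hh.1 α hα), fun α hα => ?_⟩
        rw [mul_inv_rev]
        exact hh.2 _ (hg.2 α hα)
    | inv g _ hg => exact ⟨hg.2, by rw [inv_inv]; exact hg.1⟩
  exact (key w hw).1

lemma neg_mem_root (hΦ : IsRootSystem Φ) {α : E} (hα : α ∈ Φ) : -α ∈ Φ := by
  have := hΦ.reflect_mem α hα α hα
  rwa [← sE_apply, sE_self (hΦ.nonzero α hα)] at this

/-- Pairing lemma: roots at obtuse angle sum to a root (or zero). -/
lemma add_mem_of_inner_neg (hΦ : IsRootSystem Φ) {α β : E}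
    (hα : α ∈ Φ) (hβ : β ∈ Φ) (hin : ⟪α, β⟫ < 0) (hne : α + β ≠ 0) :
    α + β ∈ Φ := by
  obtain ⟨m, hm⟩ := hΦ.crystallographic α hα β hβ
  obtain ⟨n, hn⟩ := hΦ.crystallographic β hβ α hα
  have hA : (0:ℝ) < ⟪α, α⟫ := inner_self_pos' (hΦ.nonzero α hα)
  have hB : (0:ℝ) < ⟪β, β⟫ := inner_self_pos' (hΦ.nonzero β hβ)
  have hmneg : (m:ℝ) < 0 := by
    rw [← hm]; exact div_neg_of_neg_of_pos (by linarith) hA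
  have hnneg : (n:ℝ) < 0 := by
    rw [← hn]
    have : ⟪β, α⟫ < 0 := by rwa [real_inner_comm]
    exact div_neg_of_neg_of_pos (by linarith) hB
  have hm1 : m = -1 ∨ m ≤ -2 := by
    have : m < 0 := by exact_mod_cast hmneg
    omega
  have hn1 : n = -1 ∨ n ≤ -2 := by
    have : n < 0 := by exact_mod_cast hnneg
    omega
  rcases hm1 with hm1 | hm2
  · have := hΦ.reflect_mem α hα β hβ
    unfold reflectionMap at this
    rw [hm, hm1] at this
    push_cast at this
    rw [neg_one_smul, sub_neg_eq_add, add_comm] at this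
    exact this
  rcases hn1 with hn1 | hn2
  · have := hΦ.reflect_mem β hβ α hα
    unfold reflectionMap at this
    rw [hn, hn1] at this
    push_cast at this
    rw [neg_one_smul, sub_neg_eq_add] at this
    exact this
  -- both ≤ -2 : contradiction
  exfalso
  have h1 : ⟪α, β⟫ ≤ -⟪α, α⟫ := by
    have : 2 * ⟪α, β⟫ = (m:ℝ) * ⟪α, α⟫ := by
      field_simp at hm; linarith [hm]
    nlinarith [hA, (show (m:ℝ) ≤ -2 by exact_mod_cast hm2)]
  have h2 : ⟪α, β⟫ ≤ -⟪β, β⟫ := by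
    have : 2 * ⟪β, α⟫ = (n:ℝ) * ⟪β, β⟫ := by
      field_simp at hn; linarith [hn]
    rw [show ⟪β,α⟫ = ⟪α,β⟫ from real_inner_comm α β] at this
    nlinarith [hB, (show (n:ℝ) ≤ -2 by exact_mod_cast hn2)]
  have hpos : (0:ℝ) < ⟪α + β, α + β⟫ := inner_self_pos' hne
  have : ⟪α + β, α + β⟫ = ⟪α,α⟫ + 2*⟪α,β⟫ + ⟪β,β⟫ := by
    rw [inner_add_add_self]; rw [real_inner_comm β α]; ring
  linarith



lemma sE_root_eq (hΦ : IsRootSystem Φ) {α β : E} (hα : α ∈ Φ) {m : ℤ}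
    (hm : 2 * ⟪α, β⟫ / ⟪α, α⟫ = m) : sE α β = β - (m:ℝ) • α := by
  rw [sE_apply]
  unfold reflectionMap
  rw [hm]

open Classical in
lemma root_string (hΦ : IsRootSystem Φ) {α β : E} (hα : α ∈ Φ) (hβ : β ∈ Φ)
    (h1 : β ≠ α) (h2 : β ≠ -α) {m : ℤ} (hm : 2 * ⟪α, β⟫ / ⟪α, α⟫ = m)
    {i : ℤ} (hi0 : 0 ≤ i) (him : i ≤ m) : β - (i:ℝ) • α ∈ Φ := by
  by_contra hbad
  have hA : (0:ℝ) < ⟪α, α⟫ := inner_self_pos' (hΦ.nonzero α hα)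
  have hkey : ⟪α, β⟫ = (m:ℝ) * ⟪α, α⟫ / 2 := by
    field_simp at hm ⊢; linarith
  have hsE : β - (m:ℝ) • α ∈ Φ := by
    rw [← sE_root_eq hΦ hα hm]
    rw [sE_apply]; exact hΦ.reflect_mem α hα β hβ
  -- not a multiple of α in the relevant range
  have hmult : ∀ c : ℝ, 0 ≤ c → β ≠ c • α := by
    intro c hc hceq
    rcases hΦ.reduced α hα c (hceq ▸ hβ) with rfl | rfl
    · rw [one_smul] at hceq; exact h1 hceq
    · norm_num at hc
  -- minimal bad index
  have hP : ∃ k : ℕ, (k:ℤ) ≤ m ∧ β - ((k:ℕ):ℝ) • α ∉ Φ := by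
    refine ⟨i.toNat, by omega, ?_⟩
    have hcast : ((i.toNat:ℕ):ℝ) = ((i:ℤ):ℝ) := by exact_mod_cast Int.toNat_of_nonneg hi0
    rw [hcast]
    exact hbad
  set i₀ := Nat.find hP with hi₀def
  obtain ⟨hi₀m, hi₀not⟩ := Nat.find_spec hP
  rw [← hi₀def] at hi₀m hi₀not
  have hi₀pos : i₀ ≠ 0 := by
    intro h0
    rw [h0] at hi₀not
    simp at hi₀not
    exact hi₀not hβ
  obtain ⟨j, hj⟩ : ∃ j, i₀ = j + 1 := ⟨i₀ - 1, by omega⟩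
  have hγa : β - (j:ℝ) • α ∈ Φ := by
    by_contra hno
    exact Nat.find_min hP (by omega : j < i₀) ⟨by omega, hno⟩
  -- first inequality : m ≤ 2j
  have hne1 : (β - (j:ℝ) • α) + -α ≠ 0 := by
    intro h0
    have : β = ((j:ℝ) + 1) • α := by
      rw [add_smul, one_smul]
      have h0' : β - ((j:ℝ) • α + α) = 0 := by rw [← h0]; abel
      have := sub_eq_zero.mp h0'
      rw [this]
    exact hmult ((j:ℝ)+1) (by positivity) this
  have hnot1 : (β - (j:ℝ) • α) + -α ∉ Φ := by
    have : (β - (j:ℝ) • α) + -α = β - ((i₀:ℕ):ℝ) • α := by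
      rw [hj]; push_cast; rw [add_smul, one_smul]; abel
    rw [this]; exact hi₀not
  have hin1 : ¬ (⟪β - (j:ℝ) • α, -α⟫ < 0) := by
    intro hlt
    exact hnot1 (add_mem_of_inner_neg hΦ hγa (neg_mem_root hΦ hα) hlt hne1)
  have hineq1 : (m:ℝ) ≤ 2 * j := by
    rw [inner_neg_right, inner_sub_left, real_inner_smul_left] at hin1
    rw [show ⟪β,α⟫ = ⟪α,β⟫ from real_inner_comm α β, hkey] at hin1
    push_neg at hin1
    nlinarith
  -- second index
  have hQ : ∃ k : ℕ, i₀ ≤ k ∧ (k:ℤ) ≤ m ∧ β - ((k:ℕ):ℝ) • α ∈ Φ := by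
    refine ⟨m.toNat, by omega, by omega, ?_⟩
    have hcast : ((m.toNat:ℕ):ℝ) = ((m:ℤ):ℝ) := by
      exact_mod_cast Int.toNat_of_nonneg (by omega : (0:ℤ) ≤ m)
    rw [hcast]
    exact hsE
  set b := Nat.find hQ with hbdef
  obtain ⟨hbi₀, hbm, hγb⟩ := Nat.find_spec hQ
  rw [← hbdef] at hbi₀ hbm hγb
  have hbne : b ≠ i₀ := by
    intro h
    rw [h] at hγb
    exact hi₀not hγb
  obtain ⟨c, hc⟩ : ∃ c, b = c + 1 := ⟨b - 1, by omega⟩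
  have hcnot : β - (c:ℝ) • α ∉ Φ := by
    intro hyes
    exact Nat.find_min hQ (by omega : c < b) ⟨by omega, by omega, hyes⟩
  have hne2 : (β - ((b:ℕ):ℝ) • α) + α ≠ 0 := by
    intro h0
    have : β = ((b:ℝ) - 1) • α := by
      rw [sub_smul, one_smul]
      have h0' : β - ((b:ℝ) • α - α) = 0 := by rw [← h0]; abel
      have := sub_eq_zero.mp h0'
      rw [this]
    refine hmult ((b:ℝ)-1) (by
      have : (1:ℝ) ≤ (b:ℝ) := by exact_mod_cast (by omega : 1 ≤ b)
      linarith) this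
  have hnot2 : (β - ((b:ℕ):ℝ) • α) + α ∉ Φ := by
    have : (β - ((b:ℕ):ℝ) • α) + α = β - (c:ℝ) • α := by
      rw [hc]; push_cast; rw [add_smul, one_smul]; abel
    rw [this]; exact hcnot
  have hin2 : ¬ (⟪β - ((b:ℕ):ℝ) • α, α⟫ < 0) := by
    intro hlt
    exact hnot2 (add_mem_of_inner_neg hΦ hγb hα hlt hne2)
  have hineq2 : 2 * (b:ℝ) ≤ (m:ℝ) := by
    rw [inner_sub_left, real_inner_smul_left] at hin2
    rw [show ⟪β,α⟫ = ⟪α,β⟫ from real_inner_comm α β, hkey] at hin2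
    push_neg at hin2
    nlinarith
  -- contradiction
  have : (b:ℝ) ≤ (j:ℝ) := by linarith
  have : b ≤ j := by exact_mod_cast this
  omega

lemma root_string' (hΦ : IsRootSystem Φ) {α β : E} (hα : α ∈ Φ) (hβ : β ∈ Φ)
    (h1 : β ≠ α) (h2 : β ≠ -α) {m : ℤ} (hm : 2 * ⟪α, β⟫ / ⟪α, α⟫ = m)
    {i : ℤ} (hi : (0 ≤ i ∧ i ≤ m) ∨ (m ≤ i ∧ i ≤ 0)) : β - (i:ℝ) • α ∈ Φ := by
  rcases hi with ⟨h0, hm'⟩ | ⟨hm', h0⟩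
  · exact root_string hΦ hα hβ h1 h2 hm h0 hm'
  · have hα' : -α ∈ Φ := neg_mem_root hΦ hα
    have hm2 : 2 * ⟪-α, β⟫ / ⟪-α, -α⟫ = ((-m : ℤ) : ℝ) := by
      rw [inner_neg_left, inner_neg_neg]
      push_cast
      rw [← hm]
      ring
    have h1' : β ≠ -α := h2
    have h2' : β ≠ -(-α) := by rwa [neg_neg]
    have := root_string hΦ hα' hβ h1' h2' hm2
      (i := -i) (by omega) (by omega)
    have hrw : β - ((-i : ℤ):ℝ) • (-α) = β - (i:ℝ) • α := by
      push_cast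
      rw [neg_smul, smul_neg, neg_neg]
    rwa [hrw] at this

/-- A reflection in a Levi root maps `Ψ` into `Ψ`. -/
lemma sE_mem_Psi (hΦ : IsRootSystem Φ) {Ψ : Set E} (hΨΦ : Ψ ⊆ Φ)
    (hclosed : ∀ α ∈ Ψ, ∀ β ∈ Ψ, α + β ∈ Φ → α + β ∈ Ψ)
    {α : E} (hαΨ : α ∈ Ψ) (hαΨ' : -α ∈ Ψ) {β : E} (hβ : β ∈ Ψ) :
    sE α β ∈ Ψ := by
  have hαΦ : α ∈ Φ := hΨΦ hαΨ
  have hβΦ : β ∈ Φ := hΨΦ hβ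
  have hα0 : α ≠ 0 := hΦ.nonzero α hαΦ
  rcases eq_or_ne β α with rfl | h1
  · rw [sE_self hα0]; exact hαΨ'
  rcases eq_or_ne β (-α) with rfl | h2
  · rw [map_neg, sE_self hα0, neg_neg]; exact hαΨ
  obtain ⟨m, hm⟩ := hΦ.crystallographic α hαΦ β hβΦ
  rw [sE_root_eq hΦ hαΦ hm]
  rcases le_or_gt 0 m with hm0 | hm0
  · -- walk downward subtracting α
    have key : ∀ k : ℕ, (k:ℤ) ≤ m → β - ((k:ℕ):ℝ) • α ∈ Ψ := by
      intro k
      induction k with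
      | zero => intro _; simpa using hβ
      | succ k ih =>
          intro hk1
          have hkΨ : β - ((k:ℕ):ℝ) • α ∈ Ψ := ih (by omega)
          have hsum : (β - ((k:ℕ):ℝ) • α) + -α ∈ Φ := by
            have := root_string' hΦ hαΦ hβΦ h1 h2 hm
              (i := (k:ℤ)+1) (Or.inl ⟨by omega, by omega⟩)
            have hrw : β - (((k:ℤ)+1 : ℤ):ℝ) • α = (β - ((k:ℕ):ℝ) • α) + -α := by
              push_cast; rw [add_smul, one_smul]; abel
            rwa [hrw] at this
          have := hclosed _ hkΨ _ hαΨ' hsum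
          have hrw : (β - ((k:ℕ):ℝ) • α) + -α = β - (((k+1:ℕ)):ℝ) • α := by
            push_cast; rw [add_smul, one_smul]; abel
          rwa [hrw] at this
    have := key m.toNat (by omega)
    have hcast : ((m.toNat:ℕ):ℝ) = ((m:ℤ):ℝ) := by
      exact_mod_cast Int.toNat_of_nonneg hm0
    rwa [hcast] at this
  · -- walk upward adding α
    have key : ∀ k : ℕ, m ≤ -(k:ℤ) → β + ((k:ℕ):ℝ) • α ∈ Ψ := by
      intro k
      induction k with
      | zero => intro _; simpa using hβ
      | succ k ih =>
          intro hk1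
          have hkΨ : β + ((k:ℕ):ℝ) • α ∈ Ψ := ih (by omega)
          have hsum : (β + ((k:ℕ):ℝ) • α) + α ∈ Φ := by
            have := root_string' hΦ hαΦ hβΦ h1 h2 hm
              (i := -((k:ℤ)+1)) (Or.inr ⟨by omega, by omega⟩)
            have hrw : β - ((-((k:ℤ)+1) : ℤ):ℝ) • α = (β + ((k:ℕ):ℝ) • α) + α := by
              push_cast; rw [neg_smul, add_smul, one_smul]; abel
            rwa [hrw] at this
          have := hclosed _ hkΨ _ hαΨ hsum
          have hrw : (β + ((k:ℕ):ℝ) • α) + α = β + (((k+1:ℕ)):ℝ) • α := by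
            push_cast; rw [add_smul, one_smul]; abel
          rwa [hrw] at this
    have := key (-m).toNat (by omega)
    have hcast : (((-m).toNat:ℕ):ℝ) = ((-m:ℤ):ℝ) := by
      exact_mod_cast Int.toNat_of_nonneg (by omega : (0:ℤ) ≤ -m)
    rw [hcast] at this
    push_cast at this ⊢
    rw [neg_smul] at this
    rw [show β - (m:ℝ) • α = β + -((m:ℝ) • α) by abel]
    exact this



lemma line_finite {c d : ℝ} (h : c ≠ 0 ∨ d ≠ 0) : {ε : ℝ | c + ε * d = 0}.Finite := by
  rcases eq_or_ne d 0 with rfl | hd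
  · have hc : c ≠ 0 := by tauto
    have : {ε : ℝ | c + ε * 0 = 0} = ∅ := by
      ext ε; simp [hc]
    rw [this]; exact Set.finite_empty
  · apply Set.Finite.subset (Set.finite_singleton (-c/d))
    intro ε hε
    simp only [Set.mem_setOf_eq] at hε
    simp only [Set.mem_singleton_iff]
    field_simp
    linarith

lemma exists_generic {Φ : Set E} (hfin : Φ.Finite) (h0 : ∀ α ∈ Φ, α ≠ 0) :
    ∃ u : E, ∀ α ∈ Φ, ⟪u, α⟫ ≠ 0 := by
  revert h0
  refine Set.Finite.induction_on
    (motive := fun S _ => (∀ α ∈ S, α ≠ 0) → ∃ u : E, ∀ α ∈ S, ⟪u, α⟫ ≠ 0) Φ hfin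
    (fun _ => ⟨0, fun α hα => absurd hα (Set.notMem_empty α)⟩) ?_
  intro a s ha hsfin ih h0
  obtain ⟨u, hu⟩ := ih (fun α hα => h0 α (Set.mem_insert_of_mem a hα))
  have hane : a ≠ 0 := h0 a (Set.mem_insert a s)
  have hBfin : (⋃ x ∈ insert a s, {ε : ℝ | ⟪u, x⟫ + ε * ⟪a, x⟫ = 0}).Finite := by
    apply Set.Finite.biUnion (hsfin.insert a)
    intro x hx
    rcases Set.mem_insert_iff.mp hx with rfl | hxs
    · exact line_finite (Or.inr (inner_self_pos' hane).ne')
    · exact line_finite (Or.inl (hu x hxs))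
  obtain ⟨ε, hε⟩ := hBfin.infinite_compl.nonempty
  refine ⟨u + ε • a, fun α hα => ?_⟩
  rw [inner_add_left, real_inner_smul_left]
  intro hzero
  exact hε (Set.mem_biUnion hα hzero)

/-- Positive roots with respect to a generic vector `u`. -/
def PosSet (Φ : Set E) (u : E) : Set E := {γ ∈ Φ | 0 < ⟪u, γ⟫}

/-- Simple (indecomposable positive) roots. -/
def SimpSet (Φ : Set E) (u : E) : Set E :=
  {α ∈ PosSet Φ u | ¬ ∃ γ ∈ PosSet Φ u, ∃ δ ∈ PosSet Φ u, γ + δ = α}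

section PosSys

variable {Φ : Set E} {u : E}

lemma PosSet_subset : PosSet Φ u ⊆ Φ := fun _ h => h.1

lemma SimpSet_subset_pos : SimpSet Φ u ⊆ PosSet Φ u := fun _ h => h.1

lemma pos_or_neg (hΦ : IsRootSystem Φ) (hu : ∀ α ∈ Φ, ⟪u, α⟫ ≠ 0)
    {γ : E} (hγ : γ ∈ Φ) : γ ∈ PosSet Φ u ∨ -γ ∈ PosSet Φ u := by
  rcases lt_or_gt_of_ne (hu γ hγ) with h | h
  · right
    exact ⟨neg_mem_root hΦ hγ, by rw [inner_neg_right]; linarith⟩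
  · left; exact ⟨hγ, h⟩

lemma neg_not_pos {γ : E} (hγ : γ ∈ PosSet Φ u) : -γ ∉ PosSet Φ u := by
  intro h
  have := h.2
  rw [inner_neg_right] at this
  linarith [hγ.2]

/-- Strong induction over positive roots by the value of `⟪u, ·⟫`. -/
lemma pos_strong_induction (hΦ : IsRootSystem Φ) {p : E → Prop}
    (H : ∀ β ∈ PosSet Φ u, (∀ γ ∈ PosSet Φ u, ⟪u, γ⟫ < ⟪u, β⟫ → p γ) → p β) :
    ∀ β ∈ PosSet Φ u, p β := by
  have key : ∀ n : ℕ, ∀ β ∈ PosSet Φ u,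
      ({γ ∈ PosSet Φ u | ⟪u, γ⟫ < ⟪u, β⟫}).ncard ≤ n → p β := by
    intro n
    induction n with
    | zero =>
        intro β hβ hcard
        refine H β hβ (fun γ hγ hlt => ?_)
        exfalso
        have hfin' : {γ ∈ PosSet Φ u | ⟪u, γ⟫ < ⟪u, β⟫}.Finite :=
          hΦ.finite.subset (fun x hx => hx.1.1)
        have hempty : {γ ∈ PosSet Φ u | ⟪u, γ⟫ < ⟪u, β⟫} = ∅ :=
          (Set.ncard_eq_zero hfin').mp (Nat.le_zero.mp hcard)
        exact Set.eq_empty_iff_forall_notMem.mp hempty γ ⟨hγ, hlt⟩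
    | succ n ih =>
        intro β hβ hcard
        refine H β hβ (fun γ hγ hlt => ih γ hγ ?_)
        have hsub : {x ∈ PosSet Φ u | ⟪u, x⟫ < ⟪u, γ⟫} ⊂ {x ∈ PosSet Φ u | ⟪u, x⟫ < ⟪u, β⟫} := by
          constructor
          · intro x hx
            exact ⟨hx.1, lt_trans hx.2 hlt⟩
          · intro hcontra
            exact absurd (hcontra ⟨hγ, hlt⟩).2 (lt_irrefl _)
        have hfin : {x ∈ PosSet Φ u | ⟪u, x⟫ < ⟪u, β⟫}.Finite :=
          hΦ.finite.subset (fun x hx => hx.1.1)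
        have := Set.ncard_lt_ncard hsub hfin
        omega
  intro β hβ
  exact key _ β hβ le_rfl

lemma list_sum_nonpos (l : List ℝ) (h : ∀ x ∈ l, x ≤ 0) : l.sum ≤ 0 := by
  induction l with
  | nil => simp
  | cons a t ih =>
      simp only [List.sum_cons]
      have h1 := h a (by simp)
      have h2 := ih (fun x hx => h x (by simp [hx]))
      linarith

lemma list_inner_sum (l : List E) (β : E) :
    ⟪l.sum, β⟫ = (l.map (fun x => ⟪x, β⟫)).sum := by
  induction l with
  | nil => simp
  | cons a t ih => simp [inner_add_left, ih]

/-- Every positive root is a (nonempty) sum of simple roots. -/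
lemma sum_of_simples (hΦ : IsRootSystem Φ) :
    ∀ β ∈ PosSet Φ u, ∃ l : List E, l ≠ [] ∧ (∀ x ∈ l, x ∈ SimpSet Φ u) ∧ l.sum = β := by
  refine pos_strong_induction hΦ ?_
  intro β hβ ih
  by_cases hsimp : β ∈ SimpSet Φ u
  · exact ⟨[β], by simp, by simpa using hsimp, by simp⟩
  · have : ∃ γ ∈ PosSet Φ u, ∃ δ ∈ PosSet Φ u, γ + δ = β := by
      by_contra h
      exact hsimp ⟨hβ, h⟩
    obtain ⟨γ, hγ, δ, hδ, hsum⟩ := this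
    have hfγ : ⟪u, γ⟫ < ⟪u, β⟫ := by
      have : ⟪u, β⟫ = ⟪u, γ⟫ + ⟪u, δ⟫ := by rw [← hsum, inner_add_right]
      linarith [hδ.2]
    have hfδ : ⟪u, δ⟫ < ⟪u, β⟫ := by
      have : ⟪u, β⟫ = ⟪u, γ⟫ + ⟪u, δ⟫ := by rw [← hsum, inner_add_right]
      linarith [hγ.2]
    obtain ⟨l₁, hl₁ne, hl₁, hl₁sum⟩ := ih γ hγ hfγ
    obtain ⟨l₂, hl₂ne, hl₂, hl₂sum⟩ := ih δ hδ hfδ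
    refine ⟨l₁ ++ l₂, by simp [hl₁ne], ?_, by rw [List.sum_append, hl₁sum, hl₂sum, hsum]⟩
    intro x hx
    rcases List.mem_append.mp hx with h | h
    · exact hl₁ x h
    · exact hl₂ x h

/-- For every positive root there is a simple root not orthogonal-negative to it. -/
lemma exists_simple_inner_pos (hΦ : IsRootSystem Φ) {β : E} (hβ : β ∈ PosSet Φ u) :
    ∃ α ∈ SimpSet Φ u, 0 < ⟪α, β⟫ := by
  obtain ⟨l, hlne, hl, hlsum⟩ := sum_of_simples hΦ β hβ
  by_contra h
  push_neg at h
  have hsumle : ⟪β, β⟫ ≤ 0 := by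
    have hexp : ⟪β, β⟫ = (l.map (fun x => ⟪x, β⟫)).sum := by
      rw [← hlsum, list_inner_sum, hlsum]
    rw [hexp]
    apply list_sum_nonpos
    intro y hy
    obtain ⟨x, hx, rfl⟩ := List.mem_map.mp hy
    exact h x (hl x hx)
  have : β ≠ 0 := hΦ.nonzero β hβ.1
  linarith [inner_self_pos' this]

-- ============ chunk e ============

lemma simple_sub_mem (hΦ : IsRootSystem Φ) (hu : ∀ α ∈ Φ, ⟪u, α⟫ ≠ 0) {α β : E}
    (hα : α ∈ SimpSet Φ u) (hβ : β ∈ PosSet Φ u) (hne : β ≠ α)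
    (hin : 0 < ⟪α, β⟫) : β - α ∈ PosSet Φ u := by
  have hαΦ : α ∈ Φ := hα.1.1
  have hβΦ : β ∈ Φ := hβ.1
  have hsub : β - α ∈ Φ := by
    have h1 : ⟪β, -α⟫ < 0 := by
      rw [inner_neg_right, show ⟪β,α⟫ = ⟪α,β⟫ from real_inner_comm α β]
      linarith
    have h2 : β + -α ≠ 0 := by
      intro h
      exact hne (by linear_combination (norm := abel) h)
    have := add_mem_of_inner_neg hΦ hβΦ (neg_mem_root hΦ hαΦ) h1 h2
    rwa [← sub_eq_add_neg] at this
  rcases lt_or_gt_of_ne (hu (β - α) hsub) with h | h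
  · exfalso
    have hng : α - β ∈ PosSet Φ u := by
      refine ⟨?_, ?_⟩
      · have := neg_mem_root hΦ hsub
        rwa [neg_sub] at this
      · rw [show α - β = -(β-α) by abel, inner_neg_right]
        linarith
    exact hα.2 ⟨α - β, hng, β, hβ, by abel⟩
  · exact ⟨hsub, h⟩

/-- A simple reflection maps any other positive root to a positive root. -/
lemma sE_simple_pos (hΦ : IsRootSystem Φ) (hu : ∀ α ∈ Φ, ⟪u, α⟫ ≠ 0) {α β : E}
    (hα : α ∈ SimpSet Φ u) (hβ : β ∈ PosSet Φ u) (hne : β ≠ α) :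
    sE α β ∈ PosSet Φ u ∧ sE α β ≠ α := by
  have hαΦ : α ∈ Φ := hα.1.1
  have hβΦ : β ∈ Φ := hβ.1
  have hα0 : α ≠ 0 := hΦ.nonzero α hαΦ
  have hne' : β ≠ -α := by
    intro h
    exact neg_not_pos hα.1 (h ▸ hβ)
  obtain ⟨m, hm⟩ := hΦ.crystallographic α hαΦ β hβΦ
  have hsEΦ : sE α β ∈ Φ := by
    rw [sE_apply]; exact hΦ.reflect_mem α hαΦ β hβΦ
  have hsE_ne : sE α β ≠ α := by
    intro h
    have h2 : sE α (sE α β) = sE α α := congrArg _ h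
    rw [sE_sE, sE_self hα0] at h2
    exact hne' h2
  refine ⟨?_, hsE_ne⟩
  rw [sE_root_eq hΦ hαΦ hm] at hsE_ne hsEΦ ⊢
  rcases le_or_gt (m:ℝ) 0 with hm0 | hm0
  · refine ⟨hsEΦ, ?_⟩
    rw [inner_sub_right, real_inner_smul_right]
    have h1 : (m:ℝ) * ⟪u, α⟫ ≤ 0 :=
      mul_nonpos_iff.mpr (Or.inr ⟨hm0, le_of_lt hα.1.2⟩)
    linarith [hβ.2]
  · -- m > 0 : crossing argument
    by_contra hnp
    have hmz : (0:ℤ) < m := by exact_mod_cast hm0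
    have hneg : ⟪u, β - (m:ℝ) • α⟫ < 0 := by
      rcases lt_or_gt_of_ne (hu _ hsEΦ) with h | h
      · exact h
      · exact absurd ⟨hsEΦ, h⟩ hnp
    -- find crossing index
    have hQ : ∃ k : ℕ, (k:ℤ) ≤ m ∧ ⟪u, β - ((k:ℕ):ℝ) • α⟫ < 0 := by
      refine ⟨m.toNat, by omega, ?_⟩
      have hcast : ((m.toNat:ℕ):ℝ) = ((m:ℤ):ℝ) := by
        exact_mod_cast Int.toNat_of_nonneg (by omega : (0:ℤ) ≤ m)
      rwa [hcast]
    classical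
    set k₀ := Nat.find hQ with hk₀def
    obtain ⟨hk₀m, hk₀neg⟩ := Nat.find_spec hQ
    rw [← hk₀def] at hk₀m hk₀neg
    have hk₀pos : k₀ ≠ 0 := by
      intro h0
      rw [h0] at hk₀neg
      simp only [Nat.cast_zero, zero_smul, sub_zero] at hk₀neg
      linarith [hβ.2]
    obtain ⟨j, hj⟩ : ∃ j, k₀ = j + 1 := ⟨k₀ - 1, by omega⟩
    have hγΦ : β - ((j:ℕ):ℝ) • α ∈ Φ :=
      root_string hΦ hαΦ hβΦ hne hne' hm (i := (j:ℤ)) (by omega) (by omega)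
    have hγpos : β - ((j:ℕ):ℝ) • α ∈ PosSet Φ u := by
      refine ⟨hγΦ, ?_⟩
      rcases lt_or_gt_of_ne (hu _ hγΦ) with h | h
      · exfalso
        exact Nat.find_min hQ (by omega : j < k₀) ⟨by omega, h⟩
      · exact h
    have hδΦ : β - ((k₀:ℕ):ℝ) • α ∈ Φ :=
      root_string hΦ hαΦ hβΦ hne hne' hm (i := (k₀:ℤ)) (by omega) (by omega)
    have hδpos : α - (β - ((j:ℕ):ℝ) • α) ∈ PosSet Φ u := by
      have heq : α - (β - ((j:ℕ):ℝ) • α) = -(β - ((k₀:ℕ):ℝ) • α) := by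
        rw [hj]; push_cast; rw [add_smul, one_smul]; abel
      rw [heq]
      refine ⟨neg_mem_root hΦ hδΦ, ?_⟩
      rw [inner_neg_right]
      linarith
    exact hα.2 ⟨_, hδpos, _, hγpos, by abel⟩

/-- Conjugation formula : `s_{gα} = g s_α g⁻¹` for `g` preserving the inner product. -/
lemma sE_conj {g : E ≃ₗ[ℝ] E} (hg : ∀ v w : E, ⟪g v, g w⟫ = ⟪v, w⟫) (α : E) :
    sE (g α) = g * sE α * g⁻¹ := by
  ext v
  have h1 : (g * sE α * g⁻¹ : E ≃ₗ[ℝ] E) v = g (sE α (g⁻¹ v)) := rfl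
  rw [h1, sE_apply, sE_apply]
  unfold reflectionMap
  rw [map_sub, map_smul]
  have h2 : g (g⁻¹ v) = v := g.apply_symm_apply v
  rw [h2]
  have h3 : ⟪α, (g⁻¹ : E ≃ₗ[ℝ] E) v⟫ = ⟪g α, v⟫ := by
    rw [← hg α ((g⁻¹ : E ≃ₗ[ℝ] E) v), h2]
  rw [h3, hg α α]

-- ============ chunk f ============

lemma sE_neg (α : E) : sE (-α) = sE α := by
  ext v
  rw [sE_apply, sE_apply]
  unfold reflectionMap
  rw [inner_neg_left, inner_neg_neg, smul_neg]
  rw [show 2 * -⟪α,v⟫ / ⟪α,α⟫ = -(2 * ⟪α,v⟫ / ⟪α,α⟫) by ring]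
  rw [neg_smul, neg_neg]

lemma prod_sE_mem {S : Set E} (l : List E) (hl : ∀ x ∈ l, x ∈ S) :
    (l.map sE).prod ∈ reflectionSubgroup S := by
  apply Subgroup.list_prod_mem
  intro x hx
  obtain ⟨a, ha, rfl⟩ := List.mem_map.mp hx
  exact sE_mem_reflectionSubgroup (hl a ha)

lemma prod_cons_apply (a : E) (l : List E) (v : E) :
    (((a :: l).map sE).prod) v = sE a ((l.map sE).prod v) := by
  rw [List.map_cons, List.prod_cons]
  rfl

lemma conjugate_to_simple (hΦ : IsRootSystem Φ) (hu : ∀ α ∈ Φ, ⟪u, α⟫ ≠ 0) :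
    ∀ β ∈ PosSet Φ u, ∃ w ∈ reflectionSubgroup (SimpSet Φ u),
      ∃ α ∈ SimpSet Φ u, β = w α := by
  refine pos_strong_induction hΦ ?_
  intro β hβ ih
  obtain ⟨α, hα, hin⟩ := exists_simple_inner_pos hΦ hβ
  rcases eq_or_ne β α with rfl | hne
  · exact ⟨1, one_mem _, β, hα, rfl⟩
  · have hγ : sE α β ∈ PosSet Φ u := (sE_simple_pos hΦ hu hα hβ hne).1
    have hαΦ : α ∈ Φ := hα.1.1
    obtain ⟨m, hm⟩ := hΦ.crystallographic α hαΦ β hβ.1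
    have hmpos : (0:ℝ) < (m:ℝ) := by
      rw [← hm]
      exact div_pos (by linarith) (inner_self_pos' (hΦ.nonzero α hαΦ))
    have hlt : ⟪u, sE α β⟫ < ⟪u, β⟫ := by
      rw [sE_root_eq hΦ hαΦ hm, inner_sub_right, real_inner_smul_right]
      nlinarith [hα.1.2]
    obtain ⟨w, hw, α', hα', heq⟩ := ih (sE α β) hγ hlt
    refine ⟨sE α * w, mul_mem (sE_mem_reflectionSubgroup hα) hw, α', hα', ?_⟩
    have : (sE α * w) α' = sE α (w α') := rfl
    rw [this, ← heq, sE_sE]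

lemma sE_root_mem_WΔ (hΦ : IsRootSystem Φ) (hu : ∀ α ∈ Φ, ⟪u, α⟫ ≠ 0)
    {r : E} (hr : r ∈ Φ) : sE r ∈ reflectionSubgroup (SimpSet Φ u) := by
  have key : ∀ β ∈ PosSet Φ u, sE β ∈ reflectionSubgroup (SimpSet Φ u) := by
    intro β hβ
    obtain ⟨w, hw, α, hα, rfl⟩ := conjugate_to_simple hΦ hu β hβ
    rw [sE_conj (W_inner hw) α]
    exact mul_mem (mul_mem hw (sE_mem_reflectionSubgroup hα)) (inv_mem hw)
  rcases pos_or_neg hΦ hu hr with h | h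
  · exact key r h
  · rw [← sE_neg]
    exact key (-r) h

lemma W_le_WΔ (hΦ : IsRootSystem Φ) (hu : ∀ α ∈ Φ, ⟪u, α⟫ ≠ 0) :
    reflectionSubgroup Φ ≤ reflectionSubgroup (SimpSet Φ u) := by
  rw [reflectionSubgroup, Subgroup.closure_le]
  intro g hg
  obtain ⟨α, hα, rfl⟩ := gen_eq_sE hg
  exact sE_root_mem_WΔ hΦ hu hα

lemma prod_sE_reverse (l : List E) :
    ((l.reverse.map sE).prod) = ((l.map sE).prod)⁻¹ := by
  induction l with
  | nil => simp
  | cons a t ih =>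
      rw [List.reverse_cons, List.map_append, List.prod_append, ih,
        List.map_cons, List.prod_cons]
      simp [mul_inv_rev, sE_inv]

lemma exists_word {w : E ≃ₗ[ℝ] E} {S : Set E} (hw : w ∈ reflectionSubgroup S) :
    ∃ l : List E, (∀ x ∈ l, x ∈ S) ∧ (l.map sE).prod = w := by
  induction hw using Subgroup.closure_induction with
  | mem g hg =>
      obtain ⟨α, hα, rfl⟩ := gen_eq_sE hg
      exact ⟨[α], by simpa using hα, by simp⟩
  | one => exact ⟨[], by simp, by simp⟩
  | mul g h _ _ hg hh =>
      obtain ⟨l₁, h₁, rfl⟩ := hg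
      obtain ⟨l₂, h₂, rfl⟩ := hh
      refine ⟨l₁ ++ l₂, ?_, by rw [List.map_append, List.prod_append]⟩
      intro x hx
      rcases List.mem_append.mp hx with h | h
      · exact h₁ x h
      · exact h₂ x h
  | inv g _ hg =>
      obtain ⟨l, hl, rfl⟩ := hg
      exact ⟨l.reverse, fun x hx => hl x (List.mem_reverse.mp hx), prod_sE_reverse l⟩

/-- Crossing lemma. -/
lemma cross (hΦ : IsRootSystem Φ) (hu : ∀ α ∈ Φ, ⟪u, α⟫ ≠ 0) :
    ∀ (l : List E), (∀ x ∈ l, x ∈ SimpSet Φ u) → ∀ {v : E}, v ∈ PosSet Φ u →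
      ((l.map sE).prod) v ∉ PosSet Φ u →
      ∃ l₁ x l₂, l = l₁ ++ x :: l₂ ∧ ((l₂.map sE).prod) v = x := by
  intro l
  induction l with
  | nil =>
      intro _ v hv hbad
      exact absurd hv hbad
  | cons a t ih =>
      intro hmem v hv hbad
      have hamem : a ∈ SimpSet Φ u := hmem a (by simp)
      have htmem : ∀ x ∈ t, x ∈ SimpSet Φ u := fun x hx => hmem x (by simp [hx])
      by_cases hv' : ((t.map sE).prod) v ∈ PosSet Φ u
      · -- crossing happens at the head
        rw [prod_cons_apply] at hbad
        have : ((t.map sE).prod) v = a := by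
          by_contra hne
          exact hbad (sE_simple_pos hΦ hu hamem hv' hne).1
        exact ⟨[], a, t, by simp, this⟩
      · obtain ⟨l₁, x, l₂, heq, hx⟩ := ih htmem hv hv'
        exact ⟨a :: l₁, x, l₂, by rw [heq]; rfl, hx⟩

lemma sE_mul_self (α : E) : sE α * sE α = 1 := by
  rw [show sE α * sE α = (sE α)⁻¹ * sE α by rw [sE_inv]]
  group

/-- Exchange : if a word sends the simple root `α` to a non-positive root,
the word composed with `s_α` can be shortened by (at least) one. -/
lemma exchange (hΦ : IsRootSystem Φ) (hu : ∀ α ∈ Φ, ⟪u, α⟫ ≠ 0)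
    {l : List E} (hl : ∀ x ∈ l, x ∈ SimpSet Φ u) {α : E} (hα : α ∈ SimpSet Φ u)
    (hneg : ((l.map sE).prod) α ∉ PosSet Φ u) :
    ∃ l' : List E, (∀ x ∈ l', x ∈ SimpSet Φ u) ∧
      (l'.map sE).prod = (l.map sE).prod * sE α ∧ l'.length + 2 = l.length + 1 := by
  obtain ⟨l₁, x, l₂, rfl, hx⟩ := cross hΦ hu l hl (SimpSet_subset_pos hα) hneg
  have hl₂Φ : ∀ y ∈ l₂, y ∈ Φ := fun y hy =>
    (SimpSet_subset_pos (hl y (by simp [hy]))).1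
  have hg : (l₂.map sE).prod ∈ reflectionSubgroup Φ := prod_sE_mem l₂ hl₂Φ
  have hconj : sE x = (l₂.map sE).prod * sE α * ((l₂.map sE).prod)⁻¹ := by
    rw [← hx]
    exact sE_conj (W_inner hg) α
  have hss2 : sE α * sE α = 1 := sE_mul_self α
  refine ⟨l₁ ++ l₂, ?_, ?_, by simp; omega⟩
  · intro y hy
    rcases List.mem_append.mp hy with h | h
    · exact hl y (by simp [h])
    · exact hl y (by simp [h])
  · rw [List.map_append, List.prod_append, List.map_append, List.prod_append,
      List.map_cons, List.prod_cons, hconj]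
    group
    rw [mul_assoc, hss2, mul_one]

-- ============ chunk g ============

lemma inner_list_sum_right (u : E) (l : List E) :
    ⟪u, l.sum⟫ = (l.map (fun x => ⟪u, x⟫)).sum := by
  induction l with
  | nil => simp
  | cons a t ih => simp [inner_add_right, ih]

lemma list_sum_pos' (l : List ℝ) (h : ∀ x ∈ l, 0 < x) (hne : l ≠ []) : 0 < l.sum := by
  induction l with
  | nil => exact absurd rfl hne
  | cons a t ih =>
      simp only [List.sum_cons]
      have h1 := h a (by simp)
      rcases eq_or_ne t [] with rfl | htne
      · simpa using h1
      · have h2 := ih (fun x hx => h x (by simp [hx])) htne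
        linarith

/-- If `w` maps every simple root to a positive root, it maps every positive
root to a positive root. -/
lemma pos_preserved (hΦ : IsRootSystem Φ) (hu : ∀ α ∈ Φ, ⟪u, α⟫ ≠ 0)
    {w : E ≃ₗ[ℝ] E} (hw : w ∈ reflectionSubgroup Φ)
    (h : ∀ α ∈ SimpSet Φ u, w α ∈ PosSet Φ u) :
    ∀ β ∈ PosSet Φ u, w β ∈ PosSet Φ u := by
  intro β hβ
  obtain ⟨l, hlne, hl, hlsum⟩ := sum_of_simples hΦ β hβ
  have hwβΦ : w β ∈ Φ := W_maps hΦ hw β hβ.1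
  refine ⟨hwβΦ, ?_⟩
  have hsum : w β = (l.map (fun x => w x)).sum := by
    rw [← hlsum, map_list_sum]
  have hkey : ⟪u, w β⟫ = (l.map (fun x => ⟪u, w x⟫)).sum := by
    rw [hsum, inner_list_sum_right, List.map_map]
    rfl
  rw [hkey]
  apply list_sum_pos'
  · intro y hy
    obtain ⟨x, hx, rfl⟩ := List.mem_map.mp hy
    exact (h x (hl x hx)).2
  · simpa using hlne

open Classical in
/-- If `w ∈ W` maps all positive roots to positive roots then `w = 1`. -/
lemma eq_one_of_pos_preserving (hΦ : IsRootSystem Φ) (hu : ∀ α ∈ Φ, ⟪u, α⟫ ≠ 0)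
    {w : E ≃ₗ[ℝ] E} (hw : w ∈ reflectionSubgroup Φ)
    (h : ∀ β ∈ PosSet Φ u, w β ∈ PosSet Φ u) : w = 1 := by
  have hword : ∃ n : ℕ, ∃ l : List E,
      (∀ x ∈ l, x ∈ SimpSet Φ u) ∧ (l.map sE).prod = w ∧ l.length = n := by
    obtain ⟨l, hl, hlp⟩ := exists_word (W_le_WΔ hΦ hu hw)
    exact ⟨l.length, l, hl, hlp, rfl⟩
  set n₀ := Nat.find hword with hn₀def
  obtain ⟨l, hl, hlp, hln⟩ := Nat.find_spec hword
  rw [← hn₀def] at hln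
  rcases List.eq_nil_or_concat l with rfl | ⟨l', α, rfl⟩
  · simpa using hlp.symm
  exfalso
  have hα : α ∈ SimpSet Φ u := hl α (by simp)
  have hl' : ∀ x ∈ l', x ∈ SimpSet Φ u := fun x hx => hl x (by simp [hx])
  -- w' = prod l' sends α to a non-positive root
  have hprod : (l'.map sE).prod = w * sE α := by
    have h1 : ((l' ++ [α]).map sE).prod = (l'.map sE).prod * sE α := by
      rw [List.map_append, List.prod_append]
      simp
    rw [List.concat_eq_append] at hlp
    rw [hlp] at h1
    rw [h1, mul_assoc, sE_mul_self, mul_one]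
  -- (prod l') α is not positive
  have hneg : ((l'.map sE).prod) α ∉ PosSet Φ u := by
    rw [hprod]
    have hstep : (w * sE α) α = w (sE α α) := rfl
    rw [hstep, sE_self (hΦ.nonzero α hα.1.1), map_neg]
    have hwα : w α ∈ PosSet Φ u := h α (SimpSet_subset_pos hα)
    exact neg_not_pos hwα
  obtain ⟨l'', hl'', hl''p, hl''len⟩ := exchange hΦ hu hl' hα hneg
  -- l'' represents w, shorter than n₀, contradiction
  have hrep : (l''.map sE).prod = w := by
    rw [hl''p, hprod, mul_assoc, sE_mul_self, mul_one]
  have hlen : l''.length < n₀ := by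
    rw [← hln, List.concat_eq_append]
    simp only [List.length_append, List.length_cons, List.length_nil]
    omega
  exact Nat.find_min hword hlen ⟨l'', hl'', hrep, rfl⟩

-- ============ chunk h ============

lemma count_decrease (hΦ : IsRootSystem Φ) (hu : ∀ α ∈ Φ, ⟪u, α⟫ ≠ 0)
    {w : E ≃ₗ[ℝ] E} (hw : w ∈ reflectionSubgroup Φ)
    {α : E} (hα : α ∈ SimpSet Φ u) (hwα : w α ∉ PosSet Φ u) :
    {β ∈ PosSet Φ u | (w * sE α) β ∉ PosSet Φ u}.ncard + 1
      = {β ∈ PosSet Φ u | w β ∉ PosSet Φ u}.ncard := by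
  set A := {β ∈ PosSet Φ u | w β ∉ PosSet Φ u} with hA
  set B := {β ∈ PosSet Φ u | (w * sE α) β ∉ PosSet Φ u} with hB
  have hAfin : A.Finite := hΦ.finite.subset (fun x hx => hx.1.1)
  have happly : ∀ v : E, (w * sE α) v = w (sE α v) := fun v => rfl
  have hkey : B \ {α} = sE α '' (A \ {α}) := by
    ext x
    constructor
    · rintro ⟨⟨hxP, hxB⟩, hxne⟩
      simp only [Set.mem_singleton_iff] at hxne
      have hy := sE_simple_pos hΦ hu hα hxP hxne
      refine ⟨sE α x, ⟨⟨hy.1, ?_⟩, by simpa using hy.2⟩, sE_sE α x⟩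
      rw [happly] at hxB
      exact hxB
    · rintro ⟨y, ⟨⟨hyP, hyA⟩, hyne⟩, rfl⟩
      simp only [Set.mem_singleton_iff] at hyne
      have hx := sE_simple_pos hΦ hu hα hyP hyne
      refine ⟨⟨hx.1, ?_⟩, by simpa using hx.2⟩
      rw [happly, sE_sE]
      exact hyA
  have hαA : α ∈ A := ⟨SimpSet_subset_pos hα, hwα⟩
  have hαB : α ∉ B := by
    intro hcon
    have h1 : (w * sE α) α = w (sE α α) := rfl
    have h2 : w (sE α α) = -(w α) := by
      rw [sE_self (hΦ.nonzero α hα.1.1), map_neg]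
    have hwαΦ : w α ∈ Φ := W_maps hΦ hw α hα.1.1
    have : -(w α) ∈ PosSet Φ u := by
      rcases pos_or_neg hΦ hu hwαΦ with h | h
      · exact absurd h hwα
      · exact h
    exact hcon.2 (h1 ▸ h2 ▸ this)
  have hBd : B = B \ {α} := (Set.diff_singleton_eq_self hαB).symm
  rw [hBd, hkey, Set.ncard_image_of_injective _ (sE α).injective,
    Set.ncard_diff_singleton_add_one hαA hAfin]

lemma exists_simple_neg (hΦ : IsRootSystem Φ) (hu : ∀ α ∈ Φ, ⟪u, α⟫ ≠ 0)
    {w : E ≃ₗ[ℝ] E} (hw : w ∈ reflectionSubgroup Φ)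
    (h : {β ∈ PosSet Φ u | w β ∉ PosSet Φ u}.ncard ≠ 0) :
    ∃ α ∈ SimpSet Φ u, w α ∉ PosSet Φ u := by
  by_contra hcon
  push_neg at hcon
  apply h
  rw [Set.ncard_eq_zero (hΦ.finite.subset (fun x hx => hx.1.1))]
  rw [Set.eq_empty_iff_forall_notMem]
  rintro β ⟨hβ, hβbad⟩
  exact hβbad (pos_preserved hΦ hu hw hcon β hβ)

/-- If all simple roots lie in the closed set `Ψ`, so do all positive roots. -/
lemma pos_subset_Psi (hΦ : IsRootSystem Φ) {Ψ : Set E}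
    (hclosed : ∀ α ∈ Ψ, ∀ β ∈ Ψ, α + β ∈ Φ → α + β ∈ Ψ)
    (hΔ : SimpSet Φ u ⊆ Ψ) : PosSet Φ u ⊆ Ψ := by
  intro β hβ
  refine pos_strong_induction hΦ (p := fun β => β ∈ Ψ) ?_ β hβ
  intro γ hγ ih
  by_cases hsimp : γ ∈ SimpSet Φ u
  · exact hΔ hsimp
  · have : ∃ a ∈ PosSet Φ u, ∃ b ∈ PosSet Φ u, a + b = γ := by
      by_contra h
      exact hsimp ⟨hγ, h⟩
    obtain ⟨a, ha, b, hb, hab⟩ := this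
    have hfa : ⟪u, a⟫ < ⟪u, γ⟫ := by
      have : ⟪u, γ⟫ = ⟪u, a⟫ + ⟪u, b⟫ := by rw [← hab, inner_add_right]
      linarith [hb.2]
    have hfb : ⟪u, b⟫ < ⟪u, γ⟫ := by
      have : ⟪u, γ⟫ = ⟪u, a⟫ + ⟪u, b⟫ := by rw [← hab, inner_add_right]
      linarith [ha.2]
    have := hclosed a (ih a ha hfa) b (ih b hb hfb) (hab ▸ hγ.1)
    rwa [hab] at this

-- ============ chunk i ============

lemma inner_sE_left (α u γ : E) : ⟪sE α u, γ⟫ = ⟪u, sE α γ⟫ := by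
  conv_lhs => rw [← sE_sE α γ]
  rw [sE_inner]

lemma sE_image_Psi (hΦ : IsRootSystem Φ) {Ψ : Set E} (hΨΦ : Ψ ⊆ Φ)
    (hclosed : ∀ α ∈ Ψ, ∀ β ∈ Ψ, α + β ∈ Φ → α + β ∈ Ψ)
    {α : E} (hαΨ : α ∈ Ψ) (hαΨ' : -α ∈ Ψ) : ⇑(sE α) '' Ψ = Ψ := by
  apply Set.Subset.antisymm
  · rintro x ⟨β, hβ, rfl⟩
    exact sE_mem_Psi hΦ hΨΦ hclosed hαΨ hαΨ' hβ
  · intro β hβ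
    exact ⟨sE α β, sE_mem_Psi hΦ hΨΦ hclosed hαΨ hαΨ' hβ, sE_sE α β⟩

lemma swap_increase (hΦ : IsRootSystem Φ) {Ψ : Set E} (hΨΦ : Ψ ⊆ Φ)
    (hpar : Ψ ∪ (-Ψ) = Φ) {u : E} (hu : ∀ γ ∈ Φ, ⟪u, γ⟫ ≠ 0)
    {α : E} (hα : α ∈ SimpSet Φ u) (hαΨ : α ∉ Ψ) :
    ∃ u' : E, (∀ γ ∈ Φ, ⟪u', γ⟫ ≠ 0) ∧
      (PosSet Φ u ∩ Ψ).ncard + 1 ≤ (PosSet Φ u' ∩ Ψ).ncard := by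
  have hαΦ : α ∈ Φ := hα.1.1
  have hα0 : α ≠ 0 := hΦ.nonzero α hαΦ
  refine ⟨sE α u, ?_, ?_⟩
  · intro γ hγ
    rw [inner_sE_left]
    apply hu
    rw [sE_apply]
    exact hΦ.reflect_mem α hαΦ γ hγ
  · have hnegαΨ : -α ∈ Ψ := by
      have : α ∈ Ψ ∪ (-Ψ) := hpar ▸ hαΦ
      rcases this with h | h
      · exact absurd h hαΨ
      · exact Set.mem_neg.mp h
    have hsubset : insert (-α) (PosSet Φ u ∩ Ψ) ⊆ PosSet Φ (sE α u) ∩ Ψ := by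
      rintro x (rfl | ⟨hxP, hxΨ⟩)
      · refine ⟨⟨neg_mem_root hΦ hαΦ, ?_⟩, hnegαΨ⟩
        rw [inner_sE_left, map_neg, sE_self hα0, neg_neg]
        exact hα.1.2
      · refine ⟨⟨hxP.1, ?_⟩, hxΨ⟩
        rw [inner_sE_left]
        have hxne : x ≠ α := by rintro rfl; exact hαΨ hxΨ
        exact (sE_simple_pos hΦ hu hα hxP hxne).1.2
    have hfin : (PosSet Φ (sE α u) ∩ Ψ).Finite :=
      hΦ.finite.subset (fun x hx => hx.1.1)
    have h1 : (insert (-α) (PosSet Φ u ∩ Ψ)).ncard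
        = (PosSet Φ u ∩ Ψ).ncard + 1 := by
      apply Set.ncard_insert_of_notMem
      · rintro ⟨hP, -⟩
        exact neg_not_pos hα.1 hP
      · exact hΦ.finite.subset (fun x hx => hx.1.1)
    rw [← h1]
    exact Set.ncard_le_ncard hsubset hfin

lemma neg_image (w : E ≃ₗ[ℝ] E) (S : Set E) : ⇑w '' (-S) = -(⇑w '' S) := by
  ext x
  constructor
  · rintro ⟨y, hy, rfl⟩
    rw [Set.mem_neg]
    exact ⟨-y, Set.mem_neg.mp hy, by rw [map_neg]⟩
  · intro hx
    obtain ⟨y, hy, hyx⟩ := Set.mem_neg.mp hx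
    exact ⟨-y, Set.mem_neg.mpr (by rwa [neg_neg]), by rw [map_neg, hyx, neg_neg]⟩

theorem main_statement
    (Φ : Set E) (hΦ : IsRootSystem Φ)
    (Ψ : Set E) (hΨΦ : Ψ ⊆ Φ)
    (hclosed : ∀ α ∈ Ψ, ∀ β ∈ Ψ, α + β ∈ Φ → α + β ∈ Ψ)
    (hparabolic : Ψ ∪ (-Ψ) = Φ)
    (w : E ≃ₗ[ℝ] E) (hw : w ∈ reflectionSubgroup Φ)
    (hwΨ : ⇑w '' Ψ = Ψ) :
    w ∈ reflectionSubgroup (Ψ ∩ (-Ψ)) := by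
  classical
  -- choose a generic vector maximizing the number of positive roots in Ψ
  obtain ⟨u₀, hu₀⟩ := exists_generic hΦ.finite hΦ.nonzero
  set Q : ℕ → Prop := fun n => ∃ u : E, (∀ γ ∈ Φ, ⟪u, γ⟫ ≠ 0) ∧
    (PosSet Φ u ∩ Ψ).ncard = n with hQdef
  have hbound : ∀ n, Q n → n ≤ Φ.ncard := by
    rintro n ⟨u, hu, rfl⟩
    exact Set.ncard_le_ncard (fun x hx => hx.1.1) hΦ.finite
  have hQ0 : Q ((PosSet Φ u₀ ∩ Ψ).ncard) := ⟨u₀, hu₀, rfl⟩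
  set M := Nat.findGreatest Q (Φ.ncard) with hM
  have hQM : Q M := Nat.findGreatest_spec (hbound _ hQ0) hQ0
  obtain ⟨u, hu, hMcard⟩ := hQM
  -- positive system inside Ψ
  have hPΨ : PosSet Φ u ⊆ Ψ := by
    by_contra hcon
    have hΔ : ¬ (SimpSet Φ u ⊆ Ψ) := fun h => hcon (pos_subset_Psi hΦ hclosed h)
    obtain ⟨α, hα, hαΨ⟩ := Set.not_subset.mp hΔ
    obtain ⟨u', hu', hgt⟩ := swap_increase hΦ hΨΦ hparabolic hu hα hαΨ
    have : (PosSet Φ u' ∩ Ψ).ncard ≤ M :=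
      Nat.le_findGreatest (hbound _ ⟨u', hu', rfl⟩) ⟨u', hu', rfl⟩
    omega
  -- descent on the number of positive roots sent to negative roots
  have main : ∀ n : ℕ, ∀ w : E ≃ₗ[ℝ] E, w ∈ reflectionSubgroup Φ →
      ⇑w '' Ψ = Ψ → {β ∈ PosSet Φ u | w β ∉ PosSet Φ u}.ncard = n →
      w ∈ reflectionSubgroup (Ψ ∩ (-Ψ)) := by
    intro n
    induction n using Nat.strong_induction_on with
    | _ n ih =>
      intro w hw hwΨ hcount
      rcases eq_or_ne n 0 with rfl | hn
      · have hempty : {β ∈ PosSet Φ u | w β ∉ PosSet Φ u} = ∅ :=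
          (Set.ncard_eq_zero (hΦ.finite.subset (fun x hx => hx.1.1))).mp hcount
        have hpres : ∀ β ∈ PosSet Φ u, w β ∈ PosSet Φ u := by
          intro β hβ
          by_contra hbad
          exact Set.eq_empty_iff_forall_notMem.mp hempty β ⟨hβ, hbad⟩
        rw [eq_one_of_pos_preserving hΦ hu hw hpres]
        exact one_mem _
      · obtain ⟨α, hα, hwα⟩ := exists_simple_neg hΦ hu hw (hcount ▸ hn)
        have hαP : α ∈ PosSet Φ u := SimpSet_subset_pos hα
        have hαΨ : α ∈ Ψ := hPΨ hαP
        have hwαΦ : w α ∈ Φ := W_maps hΦ hw α hα.1.1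
        have hwαΨ : w α ∈ Ψ := hwΨ ▸ Set.mem_image_of_mem _ hαΨ
        have hwαnΨ : w α ∈ -Ψ := by
          rw [Set.mem_neg]
          apply hPΨ
          rcases pos_or_neg hΦ hu hwαΦ with h | h
          · exact absurd h hwα
          · exact h
        -- α itself is in the Levi part
        have hSigStable : ⇑w '' (Ψ ∩ (-Ψ)) = Ψ ∩ (-Ψ) := by
          rw [Set.image_inter w.injective, hwΨ, neg_image, hwΨ]
        have haSig : α ∈ Ψ ∩ (-Ψ) := by
          have : w α ∈ ⇑w '' (Ψ ∩ (-Ψ)) := by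
            rw [hSigStable]; exact ⟨hwαΨ, hwαnΨ⟩
          obtain ⟨x, hx, hxw⟩ := this
          rwa [← w.injective hxw]
        have hnegαΨ : -α ∈ Ψ := Set.mem_neg.mp haSig.2
        -- pass to w * s_α
        have hw' : w * sE α ∈ reflectionSubgroup Φ :=
          mul_mem hw (sE_mem_reflectionSubgroup hα.1.1)
        have hw'Ψ : ⇑(w * sE α) '' Ψ = Ψ := by
          have hcomp : ⇑(w * sE α) '' Ψ = ⇑w '' (⇑(sE α) '' Ψ) := by
            rw [← Set.image_comp]
            rfl
          rw [hcomp, sE_image_Psi hΦ hΨΦ hclosed hαΨ hnegαΨ, hwΨ]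
        have hcount' := count_decrease hΦ hu hw hα hwα
        rw [hcount] at hcount'
        have hmem' := ih ({β ∈ PosSet Φ u | (w * sE α) β ∉ PosSet Φ u}.ncard)
          (by omega) (w * sE α) hw' hw'Ψ rfl
        have hfinal : w = (w * sE α) * sE α := by
          rw [mul_assoc, sE_mul_self, mul_one]
        rw [hfinal]
        exact mul_mem hmem' (sE_mem_reflectionSubgroup haSig)
  exact main _ w hw hwΨ rfl

/-- **Root-system form of the key step in the proof of Proposition 2.2**
(Namikawa).  Let `Φ` be a reduced crystallographic root system spanning `E`
with Weyl group `W`, and let `Ψ ⊆ Φ` be a parabolic subset, i.e. `Ψ` is closed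
(`α, β ∈ Ψ` and `α + β ∈ Φ` imply `α + β ∈ Ψ`) and `Ψ ∪ (−Ψ) = Φ`.  If `w ∈ W`
satisfies `w(Ψ) = Ψ`, then `w` lies in the subgroup generated by the
reflections `s_α` with `α ∈ Ψ ∩ (−Ψ)`. -/
theorem stabilizer_of_parabolic_subset_mem_levi_weyl
    [FiniteDimensional ℝ E]
    (Φ : Set E) (hΦ : IsRootSystem Φ)
    (Ψ : Set E) (hΨΦ : Ψ ⊆ Φ)
    (hclosed : ∀ α ∈ Ψ, ∀ β ∈ Ψ, α + β ∈ Φ → α + β ∈ Ψ)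
    (hparabolic : Ψ ∪ (-Ψ) = Φ)
    (w : E ≃ₗ[ℝ] E) (hw : w ∈ reflectionSubgroup Φ)
    (hwΨ : ⇑w '' Ψ = Ψ) :
    w ∈ reflectionSubgroup (Ψ ∩ (-Ψ)) :=
  main_statement Φ hΦ Ψ hΨΦ hclosed hparabolic w hw hwΨ
end PosSys
end
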